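/- arXiv:1406.5806 — 5 statements merged into one kernel-verified Lean document; each statement's English description precedes it below -/
import Mathlib

section
/- Let f be a mild solution of ζ₁∂ₓf = −ν f + K(f) on [0,l] with ⟨f⟩ < ∞. Then there is a constant C, depending only on γ, ν₀, ν₁, l and the constants in the hypotheses on K, such that for every multi-index α and every 0 < x ≤ min(l,1): |∫_{ζ₁>0} φ_α(ζ) |ζ₁|^{−1} e^{−ν(ζ)x/|ζ₁|} (−ν(ζ)f(0,ζ) + K(f)(0,ζ)) dζ| ≤ C(|ln x| + 1) A_α ⟨f⟩. -/
open MeasureTheory Real Set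

noncomputable section

/-- Euclidean norm of a point of ℝ³ (written in coordinates). -/
def enr (ζ : Fin 3 → ℝ) : ℝ := Real.sqrt (ζ 0 ^ 2 + ζ 1 ^ 2 + ζ 2 ^ 2)

/-- The weight functions φ_α(ζ) = π^{-3/4} ζ₁^{α₁} ζ₂^{α₂} ζ₃^{α₃} e^{-|ζ|²/2}. -/
def phiα (α : Fin 3 → ℕ) (ζ : Fin 3 → ℝ) : ℝ :=
  Real.pi ^ (-(3 : ℝ) / 4) * ζ 0 ^ (α 0) * ζ 1 ^ (α 1) * ζ 2 ^ (α 2) *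
    Real.exp (-(enr ζ) ^ 2 / 2)

/-- A_α = (2α₁)^{α₁/2}(2α₂)^{α₂/2}(2α₃)^{α₃/2} e^{-(α₁+α₂+α₃)/2} (with 0⁰ = 1). -/
def Aα (α : Fin 3 → ℕ) : ℝ :=
  (2 * (α 0 : ℝ)) ^ ((α 0 : ℝ) / 2) * (2 * (α 1 : ℝ)) ^ ((α 1 : ℝ) / 2) *
    (2 * (α 2 : ℝ)) ^ ((α 2 : ℝ) / 2) *
    Real.exp (-((α 0 : ℝ) + (α 1 : ℝ) + (α 2 : ℝ)) / 2)

/-- The integral operator K(g)(ζ) = ∫ k(ζ,ζ*) g(ζ*) dζ*. -/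
def Kop (k : (Fin 3 → ℝ) → (Fin 3 → ℝ) → ℝ) (g : (Fin 3 → ℝ) → ℝ) (ζ : Fin 3 → ℝ) : ℝ :=
  ∫ ζs, k ζ ζs * g ζs

/-- The norm ‖g‖_* = (∫ g(ζ)² ν(ζ) dζ)^{1/2}. -/
def starNorm (ν : (Fin 3 → ℝ) → ℝ) (g : (Fin 3 → ℝ) → ℝ) : ℝ :=
  Real.sqrt (∫ ζ, (g ζ) ^ 2 * ν ζ)

/-- Mild (integral-equation) solution of ζ₁ ∂ₓ f = -ν f + K(f) on [0, l]. -/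
def MildSolution (l : ℝ) (ν : (Fin 3 → ℝ) → ℝ)
    (k : (Fin 3 → ℝ) → (Fin 3 → ℝ) → ℝ) (f : ℝ → (Fin 3 → ℝ) → ℝ) : Prop :=
  (∀ x ∈ Icc (0 : ℝ) l, ∀ ζ : Fin 3 → ℝ, 0 < ζ 0 →
    f x ζ = Real.exp (-(ν ζ * x) / |ζ 0|) * f 0 ζ +
      ∫ s in (0 : ℝ)..x, (1 / |ζ 0|) * Real.exp (-(ν ζ * (x - s)) / |ζ 0|) * Kop k (f s) ζ) ∧
  (∀ x ∈ Icc (0 : ℝ) l, ∀ ζ : Fin 3 → ℝ, ζ 0 < 0 →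
    f x ζ = Real.exp (-(ν ζ * (l - x)) / |ζ 0|) * f l ζ +
      ∫ s in x..l, (1 / |ζ 0|) * Real.exp (-(ν ζ * (s - x)) / |ζ 0|) * Kop k (f s) ζ)

namespace Stmt1Aux

/-- The sup of `|t|^n e^{-t^2/4}` over `t`. -/
def Tn (n : ℕ) : ℝ := (2*(n:ℝ)) ^ ((n:ℝ)/2) * Real.exp (-(n:ℝ)/2)

lemma Tn_zero : Tn 0 = 1 := by
  unfold Tn
  norm_num

lemma Tn_pos (n : ℕ) : 0 < Tn n := by
  rcases Nat.eq_zero_or_pos n with h | h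
  · rw [h, Tn_zero]; norm_num
  · have h2n : (0:ℝ) < 2*(n:ℝ) := by
      have : (0:ℝ) < (n:ℝ) := by exact_mod_cast h
      linarith
    exact mul_pos (Real.rpow_pos_of_pos h2n _) (Real.exp_pos _)

lemma Tn_ge_half (n : ℕ) : 1/2 ≤ Tn n := by
  have he : (0:ℝ) < Real.exp 1 := Real.exp_pos 1
  have he3 : Real.exp 1 < 3 := by
    have := Real.exp_one_lt_d9
    linarith
  have key : ∀ m : ℕ, Tn m = (2*(m:ℝ)/Real.exp 1) ^ ((m:ℝ)/2) := by
    intro m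
    unfold Tn
    rw [Real.div_rpow (by positivity) he.le, Real.exp_one_rpow,
      eq_div_iff (Real.exp_ne_zero _), mul_assoc, ← Real.exp_add,
      show -(m:ℝ)/2 + (m:ℝ)/2 = 0 by ring, Real.exp_zero, mul_one]
  match n with
  | 0 => rw [Tn_zero]; norm_num
  | 1 =>
    rw [key 1]
    have h1 : (1/4 : ℝ) ≤ 2*(1:ℕ)/Real.exp 1 := by
      rw [div_le_div_iff₀ (by norm_num) he]
      push_cast
      linarith
    have h2 : ((1/4 : ℝ)) ^ (((1:ℕ):ℝ)/2) = 1/2 := by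
      rw [show ((1:ℕ):ℝ)/2 = 1/2 by norm_num, show (1/4:ℝ) = (1/2)^(2:ℕ) by norm_num,
        ← Real.rpow_natCast ((1/2:ℝ)) 2, ← Real.rpow_mul (by norm_num)]
      norm_num
    calc (1/2:ℝ) = (1/4 : ℝ) ^ (((1:ℕ):ℝ)/2) := h2.symm
      _ ≤ (2*(1:ℕ)/Real.exp 1) ^ (((1:ℕ):ℝ)/2) :=
          Real.rpow_le_rpow (by norm_num) h1 (by norm_num)
  | (m+2) =>
    rw [key (m+2)]
    have h1 : (1:ℝ) ≤ 2*((m+2:ℕ):ℝ)/Real.exp 1 := by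
      rw [le_div_iff₀ he]
      push_cast
      linarith
    have := Real.one_le_rpow h1 (by positivity : (0:ℝ) ≤ ((m+2:ℕ):ℝ)/2)
    linarith

lemma sup_bound (n : ℕ) (t : ℝ) : |t|^n * Real.exp (-(t^2/4)) ≤ Tn n := by
  rcases Nat.eq_zero_or_pos n with h | hn
  · subst h
    rw [Tn_zero, pow_zero, one_mul]
    calc Real.exp (-(t^2/4)) ≤ Real.exp 0 := Real.exp_le_exp.2 (neg_nonpos.2 (by positivity))
      _ = 1 := Real.exp_zero
  rcases eq_or_ne t 0 with ht | ht
  · subst ht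
    rw [abs_zero, zero_pow hn.ne', zero_mul]
    exact (Tn_pos n).le
  · have hu : (0:ℝ) < t^2 := by positivity
    have hn' : (0:ℝ) < (n:ℝ) := by exact_mod_cast hn
    have h2n : (0:ℝ) < 2*(n:ℝ) := by linarith
    have habs : (0:ℝ) < |t| := abs_pos.2 ht
    have hlhs : |t|^n = Real.exp ((n:ℝ)/2 * Real.log (t^2)) := by
      rw [← Real.exp_log (pow_pos habs n), Real.log_pow, ← sq_abs t, Real.log_pow]
      push_cast
      ring_nf
    have hrhs : Tn n = Real.exp ((n:ℝ)/2 * Real.log (2*(n:ℝ)) - (n:ℝ)/2) := by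
      unfold Tn
      rw [Real.rpow_def_of_pos h2n, ← Real.exp_add]
      ring_nf
    rw [hlhs, hrhs, ← Real.exp_add, Real.exp_le_exp]
    have key : Real.log (t^2) - Real.log (2*(n:ℝ)) ≤ t^2/(2*(n:ℝ)) - 1 := by
      rw [← Real.log_div hu.ne' h2n.ne']
      exact Real.log_le_sub_one_of_pos (div_pos hu h2n)
    have e1 : ((n:ℝ)/2) * (t^2/(2*(n:ℝ)) - 1) = t^2/4 - (n:ℝ)/2 := by
      field_simp
      ring
    nlinarith [mul_le_mul_of_nonneg_left key (by positivity : (0:ℝ) ≤ (n:ℝ)/2)]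

lemma gauss12 : ∫ t : ℝ, Real.exp (-(t^2/12)) = Real.sqrt (12*π) := by
  have h : (fun t : ℝ => Real.exp (-(t^2/12))) = fun t : ℝ => Real.exp (-(1/12:ℝ)*t^2) := by
    funext t; congr 1; ring
  rw [h, integral_gaussian]
  congr 1
  ring

lemma gauss12_integrable : Integrable (fun t : ℝ => Real.exp (-(t^2/12))) := by
  have h : (fun t : ℝ => Real.exp (-(t^2/12))) = fun t : ℝ => Real.exp (-(1/12:ℝ)*t^2) := by
    funext t; congr 1; ring
  rw [h]
  exact integrable_exp_neg_mul_sq (by norm_num)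

lemma exp_third_split (t : ℝ) : Real.exp (-(t^2/3)) = Real.exp (-(t^2/4)) * Real.exp (-(t^2/12)) := by
  rw [← Real.exp_add]
  congr 1
  ring

lemma moment_pt (n : ℕ) (t : ℝ) : |t|^n * Real.exp (-(t^2/3)) ≤ Tn n * Real.exp (-(t^2/12)) := by
  rw [exp_third_split, ← mul_assoc]
  exact mul_le_mul_of_nonneg_right (sup_bound n t) (Real.exp_pos _).le

lemma moment_cont (n : ℕ) : Continuous (fun t : ℝ => |t|^n * Real.exp (-(t^2/3))) := by
  apply Continuous.mul
  · exact (continuous_abs.pow n)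
  · exact Real.continuous_exp.comp (((continuous_pow 2).div_const 3).neg)

lemma moment_integrable (n : ℕ) : Integrable (fun t : ℝ => |t|^n * Real.exp (-(t^2/3))) := by
  refine Integrable.mono' (gauss12_integrable.const_mul (Tn n))
    (moment_cont n).aestronglyMeasurable (ae_of_all _ fun t => ?_)
  rw [Real.norm_eq_abs, abs_of_nonneg (by positivity)]
  exact moment_pt n t

lemma moment_bound (n : ℕ) : ∫ t : ℝ, |t|^n * Real.exp (-(t^2/3)) ≤ Real.sqrt (12*π) * Tn n := by
  calc ∫ t : ℝ, |t|^n * Real.exp (-(t^2/3))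
      ≤ ∫ t : ℝ, Tn n * Real.exp (-(t^2/12)) :=
        integral_mono (moment_integrable n) (gauss12_integrable.const_mul _)
          (fun t => moment_pt n t)
    _ = Tn n * Real.sqrt (12*π) := by rw [integral_const_mul, gauss12]
    _ = Real.sqrt (12*π) * Tn n := mul_comm _ _


lemma inv_exp_bound {c t : ℝ} (hc : 0 < c) (ht : 0 < t) : t⁻¹ * Real.exp (-(c/t)) ≤ c⁻¹ := by
  have hu : 0 < c/t := div_pos hc ht
  have h1 : c/t ≤ Real.exp (c/t) := by linarith [Real.add_one_le_exp (c/t)]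
  have h2 : Real.exp (-(c/t)) ≤ (c/t)⁻¹ := by
    rw [Real.exp_neg]
    exact inv_anti₀ hu h1
  calc t⁻¹ * Real.exp (-(c/t)) ≤ t⁻¹ * (c/t)⁻¹ :=
        mul_le_mul_of_nonneg_left h2 (inv_nonneg.2 ht.le)
    _ = c⁻¹ := by field_simp

lemma fnC_meas (c : ℝ) : Measurable (fun t : ℝ => t⁻¹ * Real.exp (-(c/t))) :=
  measurable_inv.mul ((measurable_const.div measurable_id).neg.exp)

lemma fnC_integrableOn (c : ℝ) (hc : 0 < c) {a b : ℝ} (hab : a ≤ b) (hsub : Ioc a b ⊆ Ioi 0) :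
    IntegrableOn (fun t : ℝ => t⁻¹ * Real.exp (-(c/t))) (Ioc a b) := by
  refine Integrable.mono' (g := fun _ : ℝ => c⁻¹)
    ((integrableOn_const_iff (C := c⁻¹)).2 (Or.inr (by rw [Real.volume_Ioc]; exact ENNReal.ofReal_lt_top)))
    (fnC_meas c).aestronglyMeasurable.restrict ?_
  refine (ae_restrict_iff' measurableSet_Ioc).2 (ae_of_all _ fun t ht => ?_)
  have ht0 : 0 < t := hsub ht
  rw [Real.norm_eq_abs, abs_of_nonneg (mul_nonneg (inv_nonneg.2 ht0.le) (Real.exp_pos _).le)]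
  exact inv_exp_bound hc ht0

lemma lemC (c : ℝ) (hc : 0 < c) :
    ∫ t in Ioc (0:ℝ) 1, t⁻¹ * Real.exp (-(c/t)) ≤ |Real.log c| + 1 := by
  set m := min c 1 with hm
  have hm0 : 0 < m := lt_min hc one_pos
  have hm1 : m ≤ 1 := min_le_right _ _
  have hint1 : IntegrableOn (fun t : ℝ => t⁻¹ * Real.exp (-(c/t))) (Ioc 0 m) :=
    fnC_integrableOn c hc hm0.le (fun t ht => ht.1)
  have hint2 : IntegrableOn (fun t : ℝ => t⁻¹ * Real.exp (-(c/t))) (Ioc m 1) :=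
    fnC_integrableOn c hc hm1 (fun t ht => lt_trans hm0 ht.1)
  have hsplit : Ioc (0:ℝ) 1 = Ioc 0 m ∪ Ioc m 1 := (Set.Ioc_union_Ioc_eq_Ioc hm0.le hm1).symm
  rw [hsplit, setIntegral_union (Set.Ioc_disjoint_Ioc_of_le le_rfl) measurableSet_Ioc hint1 hint2]
  have p1 : ∫ t in Ioc (0:ℝ) m, t⁻¹ * Real.exp (-(c/t)) ≤ 1 := by
    have h1 : ∫ t in Ioc (0:ℝ) m, t⁻¹ * Real.exp (-(c/t)) ≤ ∫ _ in Ioc (0:ℝ) m, c⁻¹ :=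
      setIntegral_mono_on hint1
        ((integrableOn_const_iff (C := c⁻¹)).2 (Or.inr (by rw [Real.volume_Ioc]; exact ENNReal.ofReal_lt_top)))
        measurableSet_Ioc (fun t ht => inv_exp_bound hc ht.1)
    rw [setIntegral_const, Real.volume_real_Ioc_of_le (by linarith), smul_eq_mul] at h1
    have h2 : (m - 0) * c⁻¹ ≤ 1 := by
      have : m ≤ c := min_le_left _ _
      rw [sub_zero]
      calc m * c⁻¹ ≤ c * c⁻¹ := mul_le_mul_of_nonneg_right this (inv_nonneg.2 hc.le)
        _ = 1 := mul_inv_cancel₀ hc.ne'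
    linarith
  have p2 : ∫ t in Ioc m 1, t⁻¹ * Real.exp (-(c/t)) ≤ |Real.log c| := by
    have hintinv : IntegrableOn (fun t : ℝ => t⁻¹) (Ioc m 1) := by
      refine Integrable.mono' (g := fun _ : ℝ => m⁻¹)
        ((integrableOn_const_iff (C := m⁻¹)).2 (Or.inr (by rw [Real.volume_Ioc]; exact ENNReal.ofReal_lt_top)))
        measurable_inv.aestronglyMeasurable.restrict ?_
      refine (ae_restrict_iff' measurableSet_Ioc).2 (ae_of_all _ fun t ht => ?_)
      rw [Real.norm_eq_abs, abs_of_nonneg (inv_nonneg.2 (le_of_lt (lt_trans hm0 ht.1)))]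
      exact inv_anti₀ hm0 ht.1.le
    have h1 : ∫ t in Ioc m 1, t⁻¹ * Real.exp (-(c/t)) ≤ ∫ t in Ioc m 1, t⁻¹ := by
      refine setIntegral_mono_on hint2 hintinv measurableSet_Ioc (fun t ht => ?_)
      have ht0 : 0 < t := lt_trans hm0 ht.1
      calc t⁻¹ * Real.exp (-(c/t)) ≤ t⁻¹ * 1 := by
            refine mul_le_mul_of_nonneg_left ?_ (inv_nonneg.2 ht0.le)
            exact Real.exp_le_one_iff.2 (neg_nonpos.2 (div_pos hc ht0).le)
        _ = t⁻¹ := mul_one _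
    have h2 : ∫ t in Ioc m 1, t⁻¹ = Real.log (1/m) := by
      rw [← intervalIntegral.integral_of_le hm1, integral_inv]
      exact Set.notMem_uIcc_of_lt hm0 one_pos
    have h3 : Real.log (1/m) ≤ |Real.log c| := by
      rw [one_div, Real.log_inv]
      rcases le_total c 1 with h | h
      · rw [hm, min_eq_left h]
        exact neg_le_abs _
      · rw [hm, min_eq_right h, Real.log_one, neg_zero]
        exact abs_nonneg _
    linarith
  linarith

lemma F0_meas (n : ℕ) (c : ℝ) :
    Measurable (fun t : ℝ => t^n * Real.exp (-(t^2/3)) * t⁻¹ * Real.exp (-(c/t))) := by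
  exact (((measurable_id.pow_const n).mul
    (((measurable_id.pow_const 2).div_const 3).neg.exp)).mul measurable_inv).mul
    ((measurable_const.div measurable_id).neg.exp)

lemma F0_pt (n : ℕ) {c t : ℝ} (hc : 0 < c) (ht : 0 < t) :
    t^n * Real.exp (-(t^2/3)) * t⁻¹ * Real.exp (-(c/t))
      ≤ (c⁻¹ * Tn n) * Real.exp (-(t^2/12)) := by
  have h1 : t^n * Real.exp (-(t^2/3)) ≤ Tn n * Real.exp (-(t^2/12)) := by
    have h := moment_pt n t
    rwa [abs_of_pos ht] at h
  have h2 : t⁻¹ * Real.exp (-(c/t)) ≤ c⁻¹ := inv_exp_bound hc ht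
  have hnn1 : 0 ≤ t^n * Real.exp (-(t^2/3)) := by positivity
  have hnn2 : 0 ≤ t⁻¹ * Real.exp (-(c/t)) := mul_nonneg (inv_nonneg.2 ht.le) (Real.exp_pos _).le
  calc t^n * Real.exp (-(t^2/3)) * t⁻¹ * Real.exp (-(c/t))
      = (t^n * Real.exp (-(t^2/3))) * (t⁻¹ * Real.exp (-(c/t))) := by ring
    _ ≤ (Tn n * Real.exp (-(t^2/12))) * c⁻¹ := mul_le_mul h1 h2 hnn2 (mul_nonneg (Tn_pos n).le (Real.exp_pos _).le)
    _ = (c⁻¹ * Tn n) * Real.exp (-(t^2/12)) := by ring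

lemma F0_integrableOn (n : ℕ) {c : ℝ} (hc : 0 < c) :
    IntegrableOn (fun t : ℝ => t^n * Real.exp (-(t^2/3)) * t⁻¹ * Real.exp (-(c/t))) (Ioi 0) := by
  refine Integrable.mono' ((gauss12_integrable.const_mul (c⁻¹ * Tn n)).restrict)
    (F0_meas n c).aestronglyMeasurable.restrict ?_
  refine (ae_restrict_iff' measurableSet_Ioi).2 (ae_of_all _ fun t ht => ?_)
  have ht0 : (0:ℝ) < t := ht
  rw [Real.norm_eq_abs, abs_of_nonneg (mul_nonneg (mul_nonneg (mul_nonneg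
    (pow_nonneg ht0.le n) (Real.exp_pos _).le) (inv_nonneg.2 ht0.le)) (Real.exp_pos _).le)]
  exact F0_pt n hc ht0

lemma F0_bound (n : ℕ) {c : ℝ} (hc : 0 < c) :
    ∫ t in Ioi (0:ℝ), t^n * Real.exp (-(t^2/3)) * t⁻¹ * Real.exp (-(c/t))
      ≤ (2*(|Real.log c| + 1) + Real.sqrt (12*π)) * Tn n := by
  have hsplit : Ioi (0:ℝ) = Ioc 0 1 ∪ Ioi 1 := (Set.Ioc_union_Ioi_eq_Ioi zero_le_one).symm
  have hintA : IntegrableOn (fun t : ℝ => t^n * Real.exp (-(t^2/3)) * t⁻¹ * Real.exp (-(c/t))) (Ioc 0 1) :=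
    (F0_integrableOn n hc).mono_set (fun t ht => ht.1)
  have hintB : IntegrableOn (fun t : ℝ => t^n * Real.exp (-(t^2/3)) * t⁻¹ * Real.exp (-(c/t))) (Ioi 1) :=
    (F0_integrableOn n hc).mono_set (fun t ht => show (0:ℝ) < t from lt_trans one_pos (show (1:ℝ) < t from ht))
  rw [hsplit, setIntegral_union Set.Ioc_disjoint_Ioi_same measurableSet_Ioi hintA hintB]
  have pA : ∫ t in Ioc (0:ℝ) 1, t^n * Real.exp (-(t^2/3)) * t⁻¹ * Real.exp (-(c/t))
      ≤ |Real.log c| + 1 := by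
    have h1 : ∫ t in Ioc (0:ℝ) 1, t^n * Real.exp (-(t^2/3)) * t⁻¹ * Real.exp (-(c/t))
        ≤ ∫ t in Ioc (0:ℝ) 1, t⁻¹ * Real.exp (-(c/t)) := by
      refine setIntegral_mono_on hintA (fnC_integrableOn c hc zero_le_one (fun t ht => ht.1))
        measurableSet_Ioc (fun t ht => ?_)
      have ht0 : 0 < t := ht.1
      have hb : t^n * Real.exp (-(t^2/3)) ≤ 1 := by
        calc t^n * Real.exp (-(t^2/3)) ≤ 1 * 1 := by
              refine mul_le_mul ?_ ?_ (Real.exp_pos _).le zero_le_one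
              · exact pow_le_one₀ ht0.le ht.2
              · exact Real.exp_le_one_iff.2 (neg_nonpos.2 (by positivity))
          _ = 1 := mul_one _
      calc t^n * Real.exp (-(t^2/3)) * t⁻¹ * Real.exp (-(c/t))
          = (t^n * Real.exp (-(t^2/3))) * (t⁻¹ * Real.exp (-(c/t))) := by ring
        _ ≤ 1 * (t⁻¹ * Real.exp (-(c/t))) := by
            refine mul_le_mul_of_nonneg_right hb ?_
            exact mul_nonneg (inv_nonneg.2 ht0.le) (Real.exp_pos _).le
        _ = t⁻¹ * Real.exp (-(c/t)) := one_mul _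
    linarith [lemC c hc]
  have pB : ∫ t in Ioi (1:ℝ), t^n * Real.exp (-(t^2/3)) * t⁻¹ * Real.exp (-(c/t))
      ≤ Real.sqrt (12*π) * Tn n := by
    have h1 : ∫ t in Ioi (1:ℝ), t^n * Real.exp (-(t^2/3)) * t⁻¹ * Real.exp (-(c/t))
        ≤ ∫ t in Ioi (1:ℝ), |t|^n * Real.exp (-(t^2/3)) := by
      refine setIntegral_mono_on hintB ((moment_integrable n).integrableOn)
        measurableSet_Ioi (fun t ht => ?_)
      have ht1 : (1:ℝ) < t := ht
      have ht0 : 0 < t := lt_trans one_pos ht1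
      have hb : t⁻¹ * Real.exp (-(c/t)) ≤ 1 := by
        calc t⁻¹ * Real.exp (-(c/t)) ≤ 1 * 1 := by
              refine mul_le_mul ?_ ?_ (Real.exp_pos _).le zero_le_one
              · rw [← inv_one]
                exact inv_anti₀ one_pos ht1.le
              · exact Real.exp_le_one_iff.2 (neg_nonpos.2 (div_pos hc ht0).le)
          _ = 1 := mul_one _
      calc t^n * Real.exp (-(t^2/3)) * t⁻¹ * Real.exp (-(c/t))
          = (t^n * Real.exp (-(t^2/3))) * (t⁻¹ * Real.exp (-(c/t))) := by ring
        _ ≤ (t^n * Real.exp (-(t^2/3))) * 1 := by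
            refine mul_le_mul_of_nonneg_left hb (by positivity)
        _ = |t|^n * Real.exp (-(t^2/3)) := by rw [mul_one, abs_of_pos ht0]
    have h2 : ∫ t in Ioi (1:ℝ), |t|^n * Real.exp (-(t^2/3))
        ≤ ∫ t : ℝ, |t|^n * Real.exp (-(t^2/3)) :=
      setIntegral_le_integral (moment_integrable n) (ae_of_all _ fun t => by positivity)
    linarith [moment_bound n]
  have hTn := Tn_ge_half n
  have hs : (0:ℝ) ≤ Real.sqrt (12*π) := Real.sqrt_nonneg _
  have habs : (0:ℝ) ≤ |Real.log c| := abs_nonneg _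
  nlinarith [Tn_pos n]

end Stmt1Aux

lemma Stmt1Aux.Aα_eq (α : Fin 3 → ℕ) :
    Aα α = Stmt1Aux.Tn (α 0) * Stmt1Aux.Tn (α 1) * Stmt1Aux.Tn (α 2) := by
  rw [Aα, show -(((α 0:ℕ):ℝ) + ((α 1:ℕ):ℝ) + ((α 2:ℕ):ℝ))/2 =
    -((α 0:ℕ):ℝ)/2 + (-((α 1:ℕ):ℝ)/2 + -((α 2:ℕ):ℝ)/2) by ring,
    Real.exp_add, Real.exp_add]
  unfold Stmt1Aux.Tn
  ring

set_option maxHeartbeats 2000000 in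
/-- the boundary term bound
|∫_{ζ₁>0} φ_α |ζ₁|⁻¹ e^{-ν x/|ζ₁|} L(f)(0,ζ) dζ| ≤ C (|ln x|+1) A_α ⟨f⟩,
where L(f)(0,·) = -ν f(0,·) + K(f)(0,·) and ⟨f⟩ is encoded by the bounds M₁, M₂, M₃. -/
theorem stmt1 (γ ν₀ ν₁ C₀ l : ℝ) (Ca : ℝ → ℝ) (hγ0 : 0 < γ) (hγ1 : γ ≤ 1) (hν₀ : 0 < ν₀)
    (hν₀₁ : ν₀ < ν₁) (hl : 0 < l) :
    ∃ C > (0 : ℝ),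
      ∀ (ν : (Fin 3 → ℝ) → ℝ) (k : (Fin 3 → ℝ) → (Fin 3 → ℝ) → ℝ),
        Measurable ν → Measurable (Function.uncurry k) →
        (∀ ζ, ν₀ * (1 + enr ζ) ^ γ ≤ ν ζ ∧ ν ζ ≤ ν₁ * (1 + enr ζ) ^ γ) →
        (∀ g : (Fin 3 → ℝ) → ℝ, MemLp g 2 volume → ∀ ζ,
          (1 + enr ζ) ^ ((3 : ℝ) / 2 - γ) * |Kop k g ζ| ≤ C₀ * (eLpNorm g 2 volume).toReal) →
        (∀ a : ℝ, 0 ≤ a → ∀ (g : (Fin 3 → ℝ) → ℝ) (M : ℝ),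
          (∀ ζ, (1 + enr ζ) ^ a * |g ζ| ≤ M) →
          ∀ ζ, (1 + enr ζ) ^ (2 + a - γ) * |Kop k g ζ| ≤ Ca a * M) →
        ∀ (f : ℝ → (Fin 3 → ℝ) → ℝ) (M₁ M₂ M₃ : ℝ), Measurable (Function.uncurry f) →
          MildSolution l ν k f →
          (∀ x ∈ Icc (0 : ℝ) l, Integrable (fun ζ => (f x ζ) ^ 2 * ν ζ) volume ∧
            starNorm ν (f x) ≤ M₁) →
          (∀ ζ : Fin 3 → ℝ, 0 < ζ 0 → |f 0 ζ| ≤ M₂) →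
          (∀ ζ : Fin 3 → ℝ, ζ 0 < 0 → |f l ζ| ≤ M₃) →
          ∀ (α : Fin 3 → ℕ) (x : ℝ), 0 < x → x ≤ min l 1 →
            |∫ ζ in {ζ : Fin 3 → ℝ | 0 < ζ 0}, phiα α ζ * (1 / |ζ 0|) *
                Real.exp (-(ν ζ * x) / |ζ 0|) * (-(ν ζ) * f 0 ζ + Kop k (f 0) ζ)| ≤
              C * (|Real.log x| + 1) * Aα α * (M₁ + M₂ + M₃) := by
  classical
  have hν₁ : 0 < ν₁ := lt_trans hν₀ hν₀₁
  have hsπ : (0:ℝ) < 12*π := by positivity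
  set B : ℝ := ν₁ + |C₀| / Real.sqrt ν₀ with hBdef
  set K₀ : ℝ := 2*(|Real.log ν₀|+1) + Real.sqrt (12*π) with hK₀def
  have hB : 0 < B := add_pos_of_pos_of_nonneg hν₁ (by positivity)
  have hK₀ : 0 < K₀ := by rw [hK₀def]; positivity
  refine ⟨2*B*K₀*(12*π), by positivity, ?_⟩
  intro ν k hνm hkm hνb hK2 hKa f M₁ M₂ M₃ hfm hms hstar hbd0 hbdl α x hx hxle
  obtain ⟨hInt, hsN⟩ := hstar 0 ⟨le_refl _, hl.le⟩
  have hM₁ : 0 ≤ M₁ := le_trans (Real.sqrt_nonneg _) hsN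
  have hM₂ : 0 ≤ M₂ := le_trans (abs_nonneg _) (hbd0 (fun _ => 1) (by norm_num))
  have hM₃ : 0 ≤ M₃ := le_trans (abs_nonneg _) (hbdl (fun _ => -1) (by norm_num))
  have hMsum : 0 ≤ M₁ + M₂ + M₃ := by linarith
  set c : ℝ := ν₀ * x with hcdef
  have hcpos : 0 < c := mul_pos hν₀ hx
  -- lower bound on ν
  have hνlb : ∀ ζ, ν₀ ≤ ν ζ := by
    intro ζ
    have hr0 : 0 ≤ enr ζ := Real.sqrt_nonneg _
    have h1 : (1:ℝ) ≤ (1 + enr ζ) ^ γ := Real.one_le_rpow (by linarith) hγ0.le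
    nlinarith [(hνb ζ).1]
  have hνpos : ∀ ζ, 0 < ν ζ := fun ζ => lt_of_lt_of_le hν₀ (hνlb ζ)
  -- measurability and L² bound for f 0
  have hf0m : Measurable (f 0) := hfm.comp (measurable_const.prodMk measurable_id)
  have hsq : Integrable (fun ζ => (f 0 ζ)^2) volume := by
    refine Integrable.mono' (hInt.const_mul ν₀⁻¹)
      (hf0m.pow_const 2).aestronglyMeasurable (ae_of_all _ fun ζ => ?_)
    rw [Real.norm_eq_abs, abs_of_nonneg (sq_nonneg _)]
    have h2 : (f 0 ζ)^2 * ν₀ ≤ (f 0 ζ)^2 * ν ζ :=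
      mul_le_mul_of_nonneg_left (hνlb ζ) (sq_nonneg _)
    calc (f 0 ζ)^2 = ν₀⁻¹ * ((f 0 ζ)^2 * ν₀) := by field_simp
      _ ≤ ν₀⁻¹ * ((f 0 ζ)^2 * ν ζ) := mul_le_mul_of_nonneg_left h2 (inv_nonneg.2 hν₀.le)
  have hmem : MemLp (f 0) 2 volume :=
    (memLp_two_iff_integrable_sq hf0m.aestronglyMeasurable).2 hsq
  have hL2 : (eLpNorm (f 0) 2 volume).toReal ≤ M₁ / Real.sqrt ν₀ := by
    rw [hmem.eLpNorm_eq_integral_rpow_norm (by norm_num) (by norm_num),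
      ENNReal.toReal_ofReal (by positivity)]
    have h2t : ((2:ENNReal)).toReal = 2 := by norm_num
    rw [h2t]
    have hval : (fun a => ‖f 0 a‖ ^ (2:ℝ)) = fun ζ => (f 0 ζ)^2 := by
      funext a
      rw [show (2:ℝ) = ((2:ℕ):ℝ) by norm_num, Real.rpow_natCast, Real.norm_eq_abs, sq_abs]
    rw [hval]
    have hIνnn : 0 ≤ ∫ ζ, (f 0 ζ)^2 * ν ζ :=
      integral_nonneg fun ζ => mul_nonneg (sq_nonneg _) (hνpos ζ).le
    have hIν : ∫ ζ, (f 0 ζ)^2 * ν ζ ≤ M₁^2 := by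
      have hsN' : Real.sqrt (∫ ζ, (f 0 ζ)^2 * ν ζ) ≤ M₁ := hsN
      nlinarith [hsN', Real.sq_sqrt hIνnn, Real.sqrt_nonneg (∫ ζ, (f 0 ζ)^2 * ν ζ), hsN]
    have hIb : ∫ ζ, (f 0 ζ)^2 ≤ ν₀⁻¹ * M₁^2 := by
      have step1 : ∫ ζ, (f 0 ζ)^2 ≤ ∫ ζ, ν₀⁻¹ * ((f 0 ζ)^2 * ν ζ) := by
        refine integral_mono hsq (hInt.const_mul _) (fun ζ => ?_)
        have h2 : (f 0 ζ)^2 * ν₀ ≤ (f 0 ζ)^2 * ν ζ :=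
          mul_le_mul_of_nonneg_left (hνlb ζ) (sq_nonneg _)
        calc (f 0 ζ)^2 = ν₀⁻¹ * ((f 0 ζ)^2 * ν₀) := by field_simp
          _ ≤ ν₀⁻¹ * ((f 0 ζ)^2 * ν ζ) := mul_le_mul_of_nonneg_left h2 (inv_nonneg.2 hν₀.le)
      rw [integral_const_mul] at step1
      calc ∫ ζ, (f 0 ζ)^2 ≤ ν₀⁻¹ * ∫ ζ, (f 0 ζ)^2 * ν ζ := step1
        _ ≤ ν₀⁻¹ * M₁^2 := mul_le_mul_of_nonneg_left hIν (inv_nonneg.2 hν₀.le)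
    have hnn : 0 ≤ ∫ ζ, (f 0 ζ)^2 := integral_nonneg fun _ => sq_nonneg _
    calc (∫ ζ, (f 0 ζ)^2) ^ ((2:ℝ)⁻¹) ≤ (ν₀⁻¹ * M₁^2) ^ ((2:ℝ)⁻¹) :=
          Real.rpow_le_rpow hnn hIb (by norm_num)
      _ = M₁ / Real.sqrt ν₀ := by
          rw [show ((2:ℝ)⁻¹) = 1/2 by norm_num, ← Real.sqrt_eq_rpow,
            Real.sqrt_mul (inv_nonneg.2 hν₀.le), Real.sqrt_inv, Real.sqrt_sq hM₁]
          rw [inv_mul_eq_div]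
  -- uniform bound on Kop k (f 0)
  have hK0b : ∀ ζ, |Kop k (f 0) ζ| ≤ |C₀| * M₁ / Real.sqrt ν₀ := by
    intro ζ
    have hr0 : 0 ≤ enr ζ := Real.sqrt_nonneg _
    have h1 := hK2 (f 0) hmem ζ
    have hge1 : (1:ℝ) ≤ (1+enr ζ) ^ ((3:ℝ)/2 - γ) :=
      Real.one_le_rpow (by linarith) (by linarith)
    have h2 : |Kop k (f 0) ζ| ≤ C₀ * (eLpNorm (f 0) 2 volume).toReal :=
      le_trans (le_mul_of_one_le_left (abs_nonneg _) hge1) h1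
    have h3 : C₀ * (eLpNorm (f 0) 2 volume).toReal
        ≤ |C₀| * (eLpNorm (f 0) 2 volume).toReal :=
      mul_le_mul_of_nonneg_right (le_abs_self _) ENNReal.toReal_nonneg
    have h4 : |C₀| * (eLpNorm (f 0) 2 volume).toReal ≤ |C₀| * (M₁ / Real.sqrt ν₀) :=
      mul_le_mul_of_nonneg_left hL2 (abs_nonneg _)
    calc |Kop k (f 0) ζ| ≤ |C₀| * (M₁ / Real.sqrt ν₀) := by linarith
      _ = |C₀| * M₁ / Real.sqrt ν₀ := by ring
  -- the comparison functions
  set FF : Fin 3 → ℝ → ℝ :=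
    ![(Ioi (0:ℝ)).indicator (fun t => t^(α 0) * Real.exp (-(t^2/3)) * t⁻¹ * Real.exp (-(c/t))),
      fun t => |t|^(α 1) * Real.exp (-(t^2/3)),
      fun t => |t|^(α 2) * Real.exp (-(t^2/3))] with hFFdef
  have hFF0 : FF 0 = (Ioi (0:ℝ)).indicator
      (fun t => t^(α 0) * Real.exp (-(t^2/3)) * t⁻¹ * Real.exp (-(c/t))) := by
    rw [hFFdef]; rfl
  have hFF1 : FF 1 = fun t => |t|^(α 1) * Real.exp (-(t^2/3)) := by rw [hFFdef]; rfl
  have hFF2 : FF 2 = fun t => |t|^(α 2) * Real.exp (-(t^2/3)) := by rw [hFFdef]; rfl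
  have hFFnn : ∀ i t, 0 ≤ FF i t := by
    intro i t
    fin_cases i
    · show 0 ≤ FF 0 t
      rw [hFF0]
      refine Set.indicator_nonneg (fun s hs => ?_) t
      have hs0 : (0:ℝ) < s := hs
      exact mul_nonneg (mul_nonneg (mul_nonneg (pow_nonneg hs0.le _)
        (Real.exp_pos _).le) (inv_nonneg.2 hs0.le)) (Real.exp_pos _).le
    · show 0 ≤ FF 1 t
      rw [hFF1]; positivity
    · show 0 ≤ FF 2 t
      rw [hFF2]; positivity
  have hFFint : ∀ i, Integrable (FF i) volume := by
    intro i
    fin_cases i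
    · show Integrable (FF 0) volume
      rw [hFF0]
      exact (integrable_indicator_iff measurableSet_Ioi).2
        (Stmt1Aux.F0_integrableOn (α 0) hcpos)
    · show Integrable (FF 1) volume
      rw [hFF1]; exact Stmt1Aux.moment_integrable (α 1)
    · show Integrable (FF 2) volume
      rw [hFF2]; exact Stmt1Aux.moment_integrable (α 2)
  have hGint : Integrable (fun ζ : Fin 3 → ℝ => ∏ i, FF i (ζ i)) volume :=
    Integrable.fintype_prod hFFint
  have hS : MeasurableSet {ζ : Fin 3 → ℝ | 0 < ζ 0} :=
    measurableSet_lt measurable_const (measurable_pi_apply 0)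
  -- pointwise bound
  have hkey : ∀ ζ : Fin 3 → ℝ, ζ ∈ {ζ : Fin 3 → ℝ | 0 < ζ 0} →
      |phiα α ζ * (1 / |ζ 0|) * Real.exp (-(ν ζ * x) / |ζ 0|) *
        (-(ν ζ) * f 0 ζ + Kop k (f 0) ζ)|
      ≤ (2*B*(M₁+M₂+M₃)) * ∏ i, FF i (ζ i) := by
    intro ζ hζ
    have hζ0 : (0:ℝ) < ζ 0 := hζ
    have habs0 : |ζ 0| = ζ 0 := abs_of_pos hζ0
    set r : ℝ := enr ζ with hrdef
    have hr0 : 0 ≤ r := Real.sqrt_nonneg _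
    have hr2 : r^2 = ζ 0^2 + ζ 1^2 + ζ 2^2 := Real.sq_sqrt (by positivity)
    set E : ℝ := Real.exp (-(enr ζ)^2/2) with hEdef
    set P : ℝ := ζ 0^(α 0) * |ζ 1|^(α 1) * |ζ 2|^(α 2) with hPdef
    have hPnn : 0 ≤ P := mul_nonneg (mul_nonneg (pow_nonneg hζ0.le _)
      (pow_nonneg (abs_nonneg _) _)) (pow_nonneg (abs_nonneg _) _)
    have hEnn : 0 < E := Real.exp_pos _
    set BB : ℝ := ν₁*M₂ + |C₀| * M₁/Real.sqrt ν₀ with hBBdef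
    have hBBnn : 0 ≤ BB := add_nonneg (mul_nonneg hν₁.le hM₂) (by positivity)
    -- b1 : bound on |phiα|
    have b1 : |phiα α ζ| ≤ P * E := by
      rw [phiα]
      rw [abs_mul, abs_mul, abs_mul, abs_mul, abs_pow, abs_pow, abs_pow, habs0,
        abs_of_pos (Real.exp_pos _), abs_of_pos (Real.rpow_pos_of_pos Real.pi_pos _)]
      have hπ1 : Real.pi ^ (-(3:ℝ)/4) ≤ 1 :=
        Real.rpow_le_one_of_one_le_of_nonpos (by linarith [Real.pi_gt_three]) (by norm_num)
      have hrest : 0 ≤ P * E := mul_nonneg hPnn hEnn.le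
      calc Real.pi ^ (-(3:ℝ)/4) * ζ 0 ^ α 0 * |ζ 1| ^ α 1 * |ζ 2| ^ α 2 *
            Real.exp (-(enr ζ)^2/2)
          = Real.pi ^ (-(3:ℝ)/4) * (P * E) := by rw [hPdef, hEdef]; ring
        _ ≤ 1 * (P * E) := mul_le_mul_of_nonneg_right hπ1 hrest
        _ = P * E := one_mul _
    -- b2 : exponential comparison
    have b2 : Real.exp (-(ν ζ * x) / ζ 0) ≤ Real.exp (-(c/ζ 0)) := by
      apply Real.exp_le_exp.2
      have hcx : c ≤ ν ζ * x := mul_le_mul_of_nonneg_right (hνlb ζ) hx.le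
      have h1 : c/ζ 0 ≤ (ν ζ * x)/ζ 0 := by
        rw [div_eq_mul_inv, div_eq_mul_inv]
        exact mul_le_mul_of_nonneg_right hcx (inv_nonneg.2 hζ0.le)
      rw [neg_div]
      exact neg_le_neg h1
    -- b3 : bound on the zeroth order term
    have b3 : |(-(ν ζ)) * f 0 ζ + Kop k (f 0) ζ| ≤ (1+r) * BB := by
      have hf0b := hbd0 ζ hζ0
      have hK := hK0b ζ
      have hνup : ν ζ ≤ ν₁ * (1 + r) := by
        have h2 := (hνb ζ).2
        have h3 : (1+r)^γ ≤ 1 + r := by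
          calc (1+r)^γ ≤ (1+r)^(1:ℝ) :=
                Real.rpow_le_rpow_of_exponent_le (by linarith) hγ1
            _ = 1+r := Real.rpow_one _
        have h4 := mul_le_mul_of_nonneg_left h3 hν₁.le
        linarith
      have t1 : ν ζ * |f 0 ζ| ≤ (ν₁*(1+r))*M₂ :=
        mul_le_mul hνup hf0b (abs_nonneg _) (mul_nonneg hν₁.le (by linarith))
      have t2 : |Kop k (f 0) ζ| ≤ (1+r)*(|C₀| * M₁/Real.sqrt ν₀) := by
        calc |Kop k (f 0) ζ| ≤ |C₀| * M₁/Real.sqrt ν₀ := hK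
          _ ≤ (1+r)*(|C₀| * M₁/Real.sqrt ν₀) :=
              le_mul_of_one_le_left (by positivity) (by linarith)
      calc |(-(ν ζ)) * f 0 ζ + Kop k (f 0) ζ|
          ≤ |(-(ν ζ)) * f 0 ζ| + |Kop k (f 0) ζ| := abs_add_le _ _
        _ = ν ζ * |f 0 ζ| + |Kop k (f 0) ζ| := by
            rw [abs_mul, abs_neg, abs_of_pos (hνpos ζ)]
        _ ≤ (ν₁*(1+r))*M₂ + (1+r)*(|C₀| * M₁/Real.sqrt ν₀) := by linarith
        _ = (1+r) * BB := by rw [hBBdef]; ring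
    -- b4 : absorbing (1+r) into the Gaussian
    have b4 : E * (1+r) ≤ 2 * (Real.exp (-(ζ 0^2/3)) * Real.exp (-(ζ 1^2/3)) *
        Real.exp (-(ζ 2^2/3))) := by
      have h1 : 1 + r ≤ 2 * Real.exp (r^2/6) := by
        nlinarith [Real.add_one_le_exp (r^2/6), sq_nonneg (r - 3/2)]
      have h2 : E * (2 * Real.exp (r^2/6)) = 2 * (Real.exp (-(ζ 0^2/3)) *
          Real.exp (-(ζ 1^2/3)) * Real.exp (-(ζ 2^2/3))) := by
        rw [hEdef, ← hrdef]
        rw [show (2:ℝ) * (Real.exp (-(ζ 0^2/3)) * Real.exp (-(ζ 1^2/3)) *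
            Real.exp (-(ζ 2^2/3))) = 2 * Real.exp (-(ζ 0^2/3) + (-(ζ 1^2/3) +
            -(ζ 2^2/3))) from by rw [Real.exp_add, Real.exp_add]; ring]
        rw [show Real.exp (-r^2/2) * (2 * Real.exp (r^2/6)) =
            2 * Real.exp (-r^2/2 + r^2/6) from by rw [Real.exp_add]; ring]
        congr 1
        rw [show -r^2/2 + r^2/6 = -(r^2)/3 by ring, hr2]
        ring
      calc E * (1+r) ≤ E * (2 * Real.exp (r^2/6)) :=
            mul_le_mul_of_nonneg_left h1 hEnn.le
        _ = _ := h2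
    -- assemble
    have hQnn : 0 ≤ P * (1/ζ 0) * Real.exp (-(c/ζ 0)) :=
      mul_nonneg (mul_nonneg hPnn (one_div_nonneg.2 hζ0.le)) (Real.exp_pos _).le
    have hprodnn : 0 ≤ (ζ 0^(α 0) * Real.exp (-(ζ 0^2/3)) * (ζ 0)⁻¹ *
        Real.exp (-(c/ζ 0))) * (|ζ 1|^(α 1) * Real.exp (-(ζ 1^2/3))) *
        (|ζ 2|^(α 2) * Real.exp (-(ζ 2^2/3))) := by
      refine mul_nonneg (mul_nonneg ?_ (by positivity)) (by positivity)
      exact mul_nonneg (mul_nonneg (mul_nonneg (pow_nonneg hζ0.le _)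
        (Real.exp_pos _).le) (inv_nonneg.2 hζ0.le)) (Real.exp_pos _).le
    calc |phiα α ζ * (1 / |ζ 0|) * Real.exp (-(ν ζ * x) / |ζ 0|) *
          (-(ν ζ) * f 0 ζ + Kop k (f 0) ζ)|
        = |phiα α ζ| * (1/|ζ 0|) * Real.exp (-(ν ζ * x) / |ζ 0|) *
          |(-(ν ζ)) * f 0 ζ + Kop k (f 0) ζ| := by
          rw [abs_mul, abs_mul, abs_mul,
            abs_of_nonneg (one_div_nonneg.2 (abs_nonneg (ζ 0))),
            abs_of_pos (Real.exp_pos _)]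
      _ ≤ (P * E) * (1/ζ 0) * Real.exp (-(c/ζ 0)) * ((1+r) * BB) := by
          refine mul_le_mul ?_ b3 (abs_nonneg _) ?_
          · rw [habs0]
            refine mul_le_mul ?_ b2 (Real.exp_pos _).le ?_
            · exact mul_le_mul_of_nonneg_right b1 (one_div_nonneg.2 hζ0.le)
            · exact mul_nonneg (mul_nonneg hPnn hEnn.le) (one_div_nonneg.2 hζ0.le)
          · exact mul_nonneg (mul_nonneg (mul_nonneg hPnn hEnn.le)
              (one_div_nonneg.2 hζ0.le)) (Real.exp_pos _).le
      _ = BB * (E * (1+r)) * (P * (1/ζ 0) * Real.exp (-(c/ζ 0))) := by ring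
      _ ≤ BB * (2 * (Real.exp (-(ζ 0^2/3)) * Real.exp (-(ζ 1^2/3)) *
            Real.exp (-(ζ 2^2/3)))) * (P * (1/ζ 0) * Real.exp (-(c/ζ 0))) :=
          mul_le_mul_of_nonneg_right (mul_le_mul_of_nonneg_left b4 hBBnn) hQnn
      _ = (2*BB) * ((ζ 0^(α 0) * Real.exp (-(ζ 0^2/3)) * (ζ 0)⁻¹ *
            Real.exp (-(c/ζ 0))) * (|ζ 1|^(α 1) * Real.exp (-(ζ 1^2/3))) *
            (|ζ 2|^(α 2) * Real.exp (-(ζ 2^2/3)))) := by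
          rw [hPdef]; rw [one_div]; ring
      _ ≤ (2*(B*(M₁+M₂+M₃))) * ((ζ 0^(α 0) * Real.exp (-(ζ 0^2/3)) * (ζ 0)⁻¹ *
            Real.exp (-(c/ζ 0))) * (|ζ 1|^(α 1) * Real.exp (-(ζ 1^2/3))) *
            (|ζ 2|^(α 2) * Real.exp (-(ζ 2^2/3)))) := by
          refine mul_le_mul_of_nonneg_right ?_ hprodnn
          have hd : 0 ≤ |C₀|/Real.sqrt ν₀ := by positivity
          rw [hBBdef, hBdef]
          have e : |C₀| * M₁ / Real.sqrt ν₀ = |C₀|/Real.sqrt ν₀ * M₁ := by ring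
          rw [e]
          nlinarith [mul_nonneg hν₁.le hM₁, mul_nonneg hν₁.le hM₃,
            mul_nonneg hd hM₂, mul_nonneg hd hM₃, mul_nonneg hd hM₁]
      _ = (2*B*(M₁+M₂+M₃)) * ∏ i, FF i (ζ i) := by
          rw [Fin.prod_univ_three, hFF0, hFF1, hFF2,
            Set.indicator_of_mem (show ζ 0 ∈ Ioi (0:ℝ) from hζ0)]
          ring
  -- integral bounds for the three factors
  have hI0nn : ∀ i, 0 ≤ ∫ t, FF i t := fun i => integral_nonneg (hFFnn i)
  have hlogc : |Real.log c| ≤ |Real.log ν₀| + |Real.log x| := by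
    rw [hcdef, Real.log_mul hν₀.ne' hx.ne']
    exact abs_add_le _ _
  have h0b : ∫ t, FF 0 t ≤ K₀ * (|Real.log x|+1) * Stmt1Aux.Tn (α 0) := by
    have h1 : ∫ t, FF 0 t = ∫ t in Ioi (0:ℝ),
        t^(α 0) * Real.exp (-(t^2/3)) * t⁻¹ * Real.exp (-(c/t)) := by
      rw [hFF0]
      exact integral_indicator measurableSet_Ioi
    rw [h1]
    have h2 := Stmt1Aux.F0_bound (α 0) hcpos
    have h3 : (2*(|Real.log c|+1) + Real.sqrt (12*π)) * Stmt1Aux.Tn (α 0)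
        ≤ K₀ * (|Real.log x|+1) * Stmt1Aux.Tn (α 0) := by
      refine mul_le_mul_of_nonneg_right ?_ (Stmt1Aux.Tn_pos _).le
      rw [hK₀def]
      nlinarith [abs_nonneg (Real.log x), abs_nonneg (Real.log ν₀),
        Real.sqrt_nonneg (12*π), mul_nonneg (abs_nonneg (Real.log ν₀)) (abs_nonneg (Real.log x)),
        mul_nonneg (Real.sqrt_nonneg (12*π)) (abs_nonneg (Real.log x))]
    exact h2.trans h3
  have h1b : ∫ t, FF 1 t ≤ Real.sqrt (12*π) * Stmt1Aux.Tn (α 1) := by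
    rw [hFF1]; exact Stmt1Aux.moment_bound (α 1)
  have h2b : ∫ t, FF 2 t ≤ Real.sqrt (12*π) * Stmt1Aux.Tn (α 2) := by
    rw [hFF2]; exact Stmt1Aux.moment_bound (α 2)
  -- main chain
  have hGint' : Integrable (fun ζ : Fin 3 → ℝ => (2*B*(M₁+M₂+M₃)) * ∏ i, FF i (ζ i)) volume :=
    hGint.const_mul _
  have hGnn : ∀ ζ : Fin 3 → ℝ, 0 ≤ (2*B*(M₁+M₂+M₃)) * ∏ i, FF i (ζ i) := fun ζ =>
    mul_nonneg (mul_nonneg (mul_nonneg two_pos.le hB.le) hMsum)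
      (Finset.prod_nonneg fun i _ => hFFnn i _)
  calc |∫ ζ in {ζ : Fin 3 → ℝ | 0 < ζ 0}, phiα α ζ * (1 / |ζ 0|) *
        Real.exp (-(ν ζ * x) / |ζ 0|) * (-(ν ζ) * f 0 ζ + Kop k (f 0) ζ)|
      ≤ ∫ ζ in {ζ : Fin 3 → ℝ | 0 < ζ 0}, |phiα α ζ * (1 / |ζ 0|) *
        Real.exp (-(ν ζ * x) / |ζ 0|) * (-(ν ζ) * f 0 ζ + Kop k (f 0) ζ)| := by
        have h := norm_integral_le_integral_norm
          (μ := volume.restrict {ζ : Fin 3 → ℝ | 0 < ζ 0})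
          (f := fun ζ => phiα α ζ * (1 / |ζ 0|) *
            Real.exp (-(ν ζ * x) / |ζ 0|) * (-(ν ζ) * f 0 ζ + Kop k (f 0) ζ))
        simp only [Real.norm_eq_abs] at h
        exact h
    _ ≤ ∫ ζ in {ζ : Fin 3 → ℝ | 0 < ζ 0}, (2*B*(M₁+M₂+M₃)) * ∏ i, FF i (ζ i) :=
        integral_mono_of_nonneg (ae_of_all _ fun ζ => abs_nonneg _)
          hGint'.restrict ((ae_restrict_iff' hS).2 (ae_of_all _ hkey))
    _ ≤ ∫ ζ : Fin 3 → ℝ, (2*B*(M₁+M₂+M₃)) * ∏ i, FF i (ζ i) :=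
        setIntegral_le_integral hGint' (ae_of_all _ hGnn)
    _ = (2*B*(M₁+M₂+M₃)) * ∏ i, ∫ t, FF i t := by
        rw [integral_const_mul, MeasureTheory.integral_fintype_prod_volume_eq_prod]
    _ = (2*B*(M₁+M₂+M₃)) * ((∫ t, FF 0 t) * (∫ t, FF 1 t) * (∫ t, FF 2 t)) := by
        rw [Fin.prod_univ_three]
    _ ≤ (2*B*(M₁+M₂+M₃)) * ((K₀ * (|Real.log x|+1) * Stmt1Aux.Tn (α 0)) *
          (Real.sqrt (12*π) * Stmt1Aux.Tn (α 1)) *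
          (Real.sqrt (12*π) * Stmt1Aux.Tn (α 2))) := by
        have hb0nn : 0 ≤ K₀ * (|Real.log x|+1) * Stmt1Aux.Tn (α 0) :=
          mul_nonneg (mul_nonneg hK₀.le (by positivity)) (Stmt1Aux.Tn_pos _).le
        have hb1nn : 0 ≤ Real.sqrt (12*π) * Stmt1Aux.Tn (α 1) :=
          mul_nonneg (Real.sqrt_nonneg _) (Stmt1Aux.Tn_pos _).le
        refine mul_le_mul_of_nonneg_left ?_
          (mul_nonneg (mul_nonneg two_pos.le hB.le) hMsum)
        calc (∫ t, FF 0 t) * (∫ t, FF 1 t) * (∫ t, FF 2 t)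
            ≤ (K₀ * (|Real.log x|+1) * Stmt1Aux.Tn (α 0)) * (∫ t, FF 1 t) *
              (∫ t, FF 2 t) :=
              mul_le_mul_of_nonneg_right (mul_le_mul_of_nonneg_right h0b (hI0nn 1)) (hI0nn 2)
          _ ≤ (K₀ * (|Real.log x|+1) * Stmt1Aux.Tn (α 0)) *
              (Real.sqrt (12*π) * Stmt1Aux.Tn (α 1)) * (∫ t, FF 2 t) :=
              mul_le_mul_of_nonneg_right (mul_le_mul_of_nonneg_left h1b hb0nn) (hI0nn 2)
          _ ≤ (K₀ * (|Real.log x|+1) * Stmt1Aux.Tn (α 0)) *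
              (Real.sqrt (12*π) * Stmt1Aux.Tn (α 1)) *
              (Real.sqrt (12*π) * Stmt1Aux.Tn (α 2)) :=
              mul_le_mul_of_nonneg_left h2b (mul_nonneg hb0nn hb1nn)
    _ = 2*B*K₀*(12*π) * (|Real.log x| + 1) * Aα α * (M₁ + M₂ + M₃) := by
        rw [Stmt1Aux.Aα_eq α]
        have hss : Real.sqrt (12*π) * Real.sqrt (12*π) = 12*π :=
          Real.mul_self_sqrt hsπ.le
        linear_combination (2*B*(M₁+M₂+M₃)*K₀*(|Real.log x|+1)*Stmt1Aux.Tn (α 0) *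
          Stmt1Aux.Tn (α 1) * Stmt1Aux.Tn (α 2)) * hss
end
end

section
/- Let f be a mild solution of ζ₁∂ₓf = −ν f + K(f) on [0,l] with ⟨f⟩ < ∞. Then there is a constant C, depending only on ν₀, γ and the constant C₀ in the hypothesis ‖K(g)‖_{L^∞_{3/2−γ}} ≤ C₀‖g‖_{L²}, such that sup_{0≤x≤l, ζ∈ℝ³} |f(x,ζ)| ≤ C ⟨f⟩. -/
open MeasureTheory Real Set

noncomputable section

/-- Auxiliary: the decaying exponential integral is bounded by `1/a`. -/
lemma aux_exp_integral (a c T : ℝ) (ha : 0 < a) (hc : 0 < c) :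
    ∫ u in (0:ℝ)..T, (1/c) * Real.exp (-(a*u)/c) ≤ 1/a := by
  have key : ∀ u : ℝ, HasDerivAt (fun u => -(1/a) * Real.exp (-(a*u)/c))
      ((1/c) * Real.exp (-(a*u)/c)) u := by
    intro u
    have h0 : (fun u : ℝ => -(a*u)/c) = (fun u : ℝ => (-(a/c)) * u) := by funext u; ring
    have h1 : HasDerivAt (fun u : ℝ => -(a*u)/c) (-(a/c)) u := by
      rw [h0]; simpa using (hasDerivAt_id u).const_mul (-(a/c))
    have h3 := (h1.exp).const_mul (-(1/a))
    refine h3.congr_deriv ?_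
    have ha' : a ≠ 0 := ha.ne'
    rw [show -(1/a) * (Real.exp (-(a*u)/c) * -(a/c)) = (a/a) * (1/c) * Real.exp (-(a*u)/c) by ring,
      div_self ha', one_mul]
  have hcont : Continuous fun u : ℝ => (1/c) * Real.exp (-(a*u)/c) := by fun_prop
  rw [intervalIntegral.integral_eq_sub_of_hasDerivAt (fun u _ => key u)
    (hcont.intervalIntegrable 0 T)]
  have h4 : Real.exp (-(a*0)/c) = 1 := by norm_num
  have h5 : 0 < Real.exp (-(a*T)/c) := Real.exp_pos _
  rw [h4]
  nlinarith [mul_pos (show (0:ℝ) < 1/a by positivity) h5]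

/-- Auxiliary: bound on the `L²` norm from a bound on the integral of the square. -/
lemma aux_L2 {α : Type*} [MeasurableSpace α] {μ : Measure α} (g : α → ℝ) (hmem : MemLp g 2 μ)
    (M : ℝ) (hM : 0 ≤ M) (hI : ∫ ζ, g ζ^2 ∂μ ≤ M^2) : (eLpNorm g 2 μ).toReal ≤ M := by
  rw [hmem.eLpNorm_eq_integral_rpow_norm (by norm_num) (by norm_num),
    ENNReal.toReal_ofReal (by positivity)]
  have hcast : ∀ a, ‖g a‖ ^ (ENNReal.toReal 2) = g a ^ 2 := fun a => by
    rw [show (ENNReal.toReal 2) = ((2:ℕ):ℝ) by norm_num, Real.rpow_natCast, Real.norm_eq_abs,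
      sq_abs]
  simp only [hcast]
  rw [show (ENNReal.toReal 2)⁻¹ = (1/2 : ℝ) by norm_num, ← Real.sqrt_eq_rpow]
  calc Real.sqrt (∫ ζ, g ζ^2 ∂μ) ≤ Real.sqrt (M^2) := Real.sqrt_le_sqrt hI
    _ = M := Real.sqrt_sq hM

/-- Auxiliary: pointwise bound on `Kop` along the solution. -/
lemma aux_kop_bound (γ ν₀ C₀ : ℝ) (hγ0 : 0 < γ) (hν₀ : 0 < ν₀)
    (l : ℝ) (hl : 0 < l)
    (ν : (Fin 3 → ℝ) → ℝ) (k : (Fin 3 → ℝ) → (Fin 3 → ℝ) → ℝ)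
    (hνb : ∀ ζ, ν₀ * (1 + enr ζ) ^ γ ≤ ν ζ)
    (hK : ∀ g : (Fin 3 → ℝ) → ℝ, MemLp g 2 volume → ∀ ζ,
      (1 + enr ζ) ^ ((3 : ℝ) / 2 - γ) * |Kop k g ζ| ≤ C₀ * (eLpNorm g 2 volume).toReal)
    (f : ℝ → (Fin 3 → ℝ) → ℝ) (M₁ : ℝ) (hfm : Measurable (Function.uncurry f))
    (hstar : ∀ x ∈ Icc (0 : ℝ) l, Integrable (fun ζ => (f x ζ) ^ 2 * ν ζ) volume ∧
      starNorm ν (f x) ≤ M₁) :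
    ∀ s ∈ Icc (0:ℝ) l, ∀ ζ' : Fin 3 → ℝ,
      |Kop k (f s) ζ'| ≤ (|C₀| * (M₁ / Real.sqrt ν₀)) * (1 + enr ζ') ^ (γ - (3:ℝ)/2) := by
  have henr : ∀ ζ' : Fin 3 → ℝ, 0 ≤ enr ζ' := fun ζ' => Real.sqrt_nonneg _
  have hP1 : ∀ ζ' : Fin 3 → ℝ, (1:ℝ) ≤ 1 + enr ζ' := fun ζ' => by linarith [henr ζ']
  have hνν₀ : ∀ ζ', ν₀ ≤ ν ζ' := by
    intro ζ'
    have h1 : (1:ℝ) ≤ (1 + enr ζ') ^ γ := Real.one_le_rpow (hP1 ζ') hγ0.le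
    nlinarith [hνb ζ']
  have hMone : 0 ≤ M₁ := le_trans (Real.sqrt_nonneg _) ((hstar 0 ⟨le_refl _, hl.le⟩).2)
  intro s hs ζ'
  have hms : Measurable (f s) := hfm.comp measurable_prodMk_left
  have hint := (hstar s hs).1
  have hdom : ∀ ζ'', f s ζ'' ^ 2 ≤ ν₀⁻¹ * (f s ζ'' ^ 2 * ν ζ'') := by
    intro ζ''
    have h1 := mul_le_mul_of_nonneg_left (hνν₀ ζ'') (sq_nonneg (f s ζ''))
    have h2 : ν₀ * ν₀⁻¹ = 1 := mul_inv_cancel₀ hν₀.ne'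
    nlinarith [inv_nonneg.mpr hν₀.le]
  have hsq : Integrable (fun ζ'' => f s ζ'' ^ 2) volume := by
    refine (hint.const_mul ν₀⁻¹).mono' ((hms.pow_const 2).aestronglyMeasurable) ?_
    refine ae_of_all _ fun ζ'' => ?_
    rw [Real.norm_eq_abs, abs_of_nonneg (sq_nonneg _)]
    exact hdom ζ''
  have hmem : MemLp (f s) 2 volume := (memLp_two_iff_integrable_sq hms.aestronglyMeasurable).2 hsq
  have hIν : ∫ ζ'', f s ζ'' ^ 2 * ν ζ'' ≤ M₁ ^ 2 := by
    have h₀ : 0 ≤ ∫ ζ'', f s ζ'' ^ 2 * ν ζ'' := integral_nonneg fun ζ'' =>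
      mul_nonneg (sq_nonneg _) (le_trans hν₀.le (hνν₀ ζ''))
    have h1 := (hstar s hs).2
    unfold starNorm at h1
    nlinarith [Real.sq_sqrt h₀, Real.sqrt_nonneg (∫ ζ'', f s ζ'' ^ 2 * ν ζ'')]
  have hI : ∫ ζ'', f s ζ'' ^ 2 ≤ (M₁ / Real.sqrt ν₀) ^ 2 := by
    have hle : ∫ ζ'', f s ζ'' ^ 2 ≤ ∫ ζ'', ν₀⁻¹ * (f s ζ'' ^ 2 * ν ζ'') :=
      integral_mono hsq (hint.const_mul _) hdom
    rw [integral_const_mul] at hle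
    have h2 : ν₀⁻¹ * (∫ ζ'', f s ζ'' ^ 2 * ν ζ'') ≤ ν₀⁻¹ * M₁ ^ 2 :=
      mul_le_mul_of_nonneg_left hIν (inv_nonneg.mpr hν₀.le)
    have h3 : ν₀⁻¹ * M₁ ^ 2 = (M₁ / Real.sqrt ν₀) ^ 2 := by
      rw [div_pow, Real.sq_sqrt hν₀.le]
      ring
    linarith
  have hLp : (eLpNorm (f s) 2 volume).toReal ≤ M₁ / Real.sqrt ν₀ :=
    aux_L2 _ hmem _ (by positivity) hI
  have hD : (1 + enr ζ') ^ ((3 : ℝ) / 2 - γ) * |Kop k (f s) ζ'| ≤ |C₀| * (M₁ / Real.sqrt ν₀) :=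
    le_trans (hK (f s) hmem ζ')
      (mul_le_mul (le_abs_self C₀) hLp ENNReal.toReal_nonneg (abs_nonneg C₀))
  have hPpos : (0:ℝ) < (1 + enr ζ') ^ ((3 : ℝ) / 2 - γ) :=
    Real.rpow_pos_of_pos (by linarith [henr ζ']) _
  rw [show γ - (3:ℝ)/2 = -((3:ℝ)/2 - γ) by ring, Real.rpow_neg (by linarith [henr ζ'])]
  rw [← div_eq_mul_inv, le_div_iff₀' hPpos]
  exact hD

set_option maxHeartbeats 1000000 in
/-- a mild solution with ⟨f⟩ < ∞ is uniformly bounded: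
|f(x,ζ)| ≤ C ⟨f⟩ (here ⟨f⟩ is encoded through bounds M₁ ≥ |||f|||,
M₂ ≥ ‖f(0,·)‖_{L^∞({ζ₁>0})}, M₃ ≥ ‖f(l,·)‖_{L^∞({ζ₁<0})}; the point ζ₁ = 0 is the
null set on which a mild solution is not determined). C depends only on ν₀, γ, C₀. -/
theorem stmt4 (γ ν₀ ν₁ C₀ : ℝ) (hγ0 : 0 < γ) (hγ1 : γ ≤ 1) (hν₀ : 0 < ν₀) (hν₀₁ : ν₀ < ν₁) :
    ∃ C > (0 : ℝ),
      ∀ (l : ℝ), 0 < l →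
      ∀ (ν : (Fin 3 → ℝ) → ℝ) (k : (Fin 3 → ℝ) → (Fin 3 → ℝ) → ℝ),
        Measurable ν → Measurable (Function.uncurry k) →
        (∀ ζ, ν₀ * (1 + enr ζ) ^ γ ≤ ν ζ ∧ ν ζ ≤ ν₁ * (1 + enr ζ) ^ γ) →
        (∀ g : (Fin 3 → ℝ) → ℝ, MemLp g 2 volume → ∀ ζ,
          (1 + enr ζ) ^ ((3 : ℝ) / 2 - γ) * |Kop k g ζ| ≤ C₀ * (eLpNorm g 2 volume).toReal) →
        ∀ (f : ℝ → (Fin 3 → ℝ) → ℝ) (M₁ M₂ M₃ : ℝ), Measurable (Function.uncurry f) →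
          MildSolution l ν k f →
          (∀ x ∈ Icc (0 : ℝ) l, Integrable (fun ζ => (f x ζ) ^ 2 * ν ζ) volume ∧
            starNorm ν (f x) ≤ M₁) →
          (∀ ζ : Fin 3 → ℝ, 0 < ζ 0 → |f 0 ζ| ≤ M₂) →
          (∀ ζ : Fin 3 → ℝ, ζ 0 < 0 → |f l ζ| ≤ M₃) →
          ∀ x ∈ Icc (0 : ℝ) l, ∀ ζ : Fin 3 → ℝ, ζ 0 ≠ 0 →
            |f x ζ| ≤ C * (M₁ + M₂ + M₃) := by
  refine ⟨1 + |C₀| / (ν₀ * Real.sqrt ν₀), by positivity, ?_⟩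
  intro l hl ν k hνm hkm hνb hK f M₁ M₂ M₃ hfm hms hstar h0 hlb x hx ζ hζ
  set q : ℝ := |C₀| / (ν₀ * Real.sqrt ν₀) with hqdef
  have hq0 : 0 ≤ q := by positivity
  have henr : ∀ ζ' : Fin 3 → ℝ, 0 ≤ enr ζ' := fun ζ' => Real.sqrt_nonneg _
  have hP1 : ∀ ζ' : Fin 3 → ℝ, (1:ℝ) ≤ 1 + enr ζ' := fun ζ' => by linarith [henr ζ']
  have hνν₀ : ∀ ζ', ν₀ ≤ ν ζ' := by
    intro ζ'
    have h1 : (1:ℝ) ≤ (1 + enr ζ') ^ γ := Real.one_le_rpow (hP1 ζ') hγ0.le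
    nlinarith [(hνb ζ').1]
  have hM₁ : 0 ≤ M₁ := le_trans (Real.sqrt_nonneg _) ((hstar 0 ⟨le_refl _, hl.le⟩).2)
  have hM₂ : 0 ≤ M₂ := le_trans (abs_nonneg _) (h0 ![1,0,0] (by norm_num))
  have hM₃ : 0 ≤ M₃ := le_trans (abs_nonneg _) (hlb ![-1,0,0] (by norm_num))
  set D : ℝ := |C₀| * (M₁ / Real.sqrt ν₀) with hDdef
  have hD0 : 0 ≤ D := by positivity
  have hKb : ∀ s ∈ Icc (0:ℝ) l, |Kop k (f s) ζ| ≤ D * (1 + enr ζ) ^ (γ - (3:ℝ)/2) :=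
    fun s hs => aux_kop_bound γ ν₀ C₀ hγ0 hν₀ l hl ν k (fun ζ' => (hνb ζ').1) hK f M₁
      hfm hstar s hs ζ
  set Dp : ℝ := D * (1 + enr ζ) ^ (γ - (3:ℝ)/2) with hDpdef
  have hDp0 : 0 ≤ Dp :=
    mul_nonneg hD0 (Real.rpow_pos_of_pos (by linarith [henr ζ]) _).le
  have hDple : Dp ≤ D := by
    have h1 : (1 + enr ζ) ^ (γ - (3:ℝ)/2) ≤ 1 :=
      Real.rpow_le_one_of_one_le_of_nonpos (hP1 ζ) (by linarith)
    have h2 : (0:ℝ) < (1 + enr ζ) ^ (γ - (3:ℝ)/2) :=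
      Real.rpow_pos_of_pos (by linarith [henr ζ]) _
    nlinarith
  have ha : 0 < ν ζ := lt_of_lt_of_le hν₀ (hνν₀ ζ)
  have hc : 0 < |ζ 0| := abs_pos.2 hζ
  have hcb : (1:ℝ)/(ν ζ) ≤ 1/ν₀ := one_div_le_one_div_of_le hν₀ (hνν₀ ζ)
  obtain ⟨hx0, hxl⟩ := hx
  have hfinal : M₂ + M₃ + (1/ν₀) * D ≤ (1 + q) * (M₁ + M₂ + M₃) := by
    have hkey : (1/ν₀) * D = q * M₁ := by
      rw [hDdef, hqdef]
      have hs0 : Real.sqrt ν₀ ≠ 0 := (Real.sqrt_pos.2 hν₀).ne'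
      field_simp
    rw [hkey]
    nlinarith [mul_nonneg hq0 hM₂, mul_nonneg hq0 hM₃]
  rcases hζ.lt_or_gt with hneg | hpos
  · -- ζ 0 < 0 : use the backward representation
    rw [(hms.2 x ⟨hx0, hxl⟩ ζ hneg)]
    have hterm1 : |Real.exp (-(ν ζ * (l - x)) / |ζ 0|) * f l ζ| ≤ M₃ := by
      rw [abs_mul, abs_of_nonneg (Real.exp_pos _).le]
      have he : Real.exp (-(ν ζ * (l - x)) / |ζ 0|) ≤ 1 := by
        rw [Real.exp_le_one_iff]
        apply div_nonpos_of_nonpos_of_nonneg _ (abs_nonneg _)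
        nlinarith
      have h2 := hlb ζ hneg
      nlinarith [abs_nonneg (f l ζ)]
    have hboundfun : IntervalIntegrable
        (fun s => (1/|ζ 0|) * Real.exp (-(ν ζ * (s - x)) / |ζ 0|) * Dp) volume x l :=
      (by fun_prop : Continuous
        fun s => (1/|ζ 0|) * Real.exp (-(ν ζ * (s - x)) / |ζ 0|) * Dp).intervalIntegrable x l
    have hptle : ∀ s ∈ Set.uIoc x l,
        ‖(1/|ζ 0|) * Real.exp (-(ν ζ * (s - x)) / |ζ 0|) * Kop k (f s) ζ‖ ≤
        (1/|ζ 0|) * Real.exp (-(ν ζ * (s - x)) / |ζ 0|) * Dp := by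
      intro s hsI
      rw [Set.uIoc_of_le hxl] at hsI
      have hsIcc : s ∈ Icc (0:ℝ) l := ⟨hx0.trans hsI.1.le, hsI.2⟩
      rw [Real.norm_eq_abs, abs_mul, abs_mul,
        abs_of_nonneg (by positivity : (0:ℝ) ≤ 1/|ζ 0|), abs_of_nonneg (Real.exp_pos _).le]
      exact mul_le_mul_of_nonneg_left (hKb s hsIcc) (by positivity)
    have hibound := (intervalIntegral.norm_integral_le_of_norm_le hxl
      (ae_of_all _ fun t ht => hptle t (by rwa [Set.uIoc_of_le hxl])) hboundfun).trans
      (le_abs_self _)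
    have hexp : ∫ s in x..l, (1/|ζ 0|) * Real.exp (-(ν ζ * (s - x)) / |ζ 0|) * Dp =
        (∫ s in x..l, (1/|ζ 0|) * Real.exp (-(ν ζ * (s - x)) / |ζ 0|)) * Dp :=
      intervalIntegral.integral_mul_const _ _
    have hcomp : ∫ s in x..l, (1/|ζ 0|) * Real.exp (-(ν ζ * (s - x)) / |ζ 0|) =
        ∫ u in (x - x)..(l - x), (1/|ζ 0|) * Real.exp (-(ν ζ * u) / |ζ 0|) :=
      intervalIntegral.integral_comp_sub_right
        (fun u => (1/|ζ 0|) * Real.exp (-(ν ζ * u) / |ζ 0|)) x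
    have hinner_le : ∫ s in x..l, (1/|ζ 0|) * Real.exp (-(ν ζ * (s - x)) / |ζ 0|) ≤ 1/(ν ζ) := by
      rw [hcomp, sub_self]
      exact aux_exp_integral (ν ζ) |ζ 0| (l - x) ha hc
    have hinner_nonneg : 0 ≤ ∫ s in x..l, (1/|ζ 0|) * Real.exp (-(ν ζ * (s - x)) / |ζ 0|) :=
      intervalIntegral.integral_nonneg hxl (fun u _ => by positivity)
    calc |Real.exp (-(ν ζ * (l - x)) / |ζ 0|) * f l ζ +
          ∫ s in x..l, (1/|ζ 0|) * Real.exp (-(ν ζ * (s - x)) / |ζ 0|) * Kop k (f s) ζ|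
        ≤ M₃ + |∫ s in x..l, (1/|ζ 0|) * Real.exp (-(ν ζ * (s - x)) / |ζ 0|) * Kop k (f s) ζ| :=
          le_trans (abs_add_le _ _) (by gcongr)
      _ ≤ M₃ + |∫ s in x..l, (1/|ζ 0|) * Real.exp (-(ν ζ * (s - x)) / |ζ 0|) * Dp| := by
          have := hibound; rw [Real.norm_eq_abs] at this; linarith
      _ ≤ M₃ + (1/ν₀) * D := by
          rw [hexp, abs_of_nonneg (mul_nonneg hinner_nonneg hDp0)]
          have := mul_le_mul (hinner_le.trans hcb) hDple hDp0 (by positivity)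
          linarith
      _ ≤ (1 + q) * (M₁ + M₂ + M₃) := by linarith
  · -- 0 < ζ 0 : use the forward representation
    rw [(hms.1 x ⟨hx0, hxl⟩ ζ hpos)]
    have hterm1 : |Real.exp (-(ν ζ * x) / |ζ 0|) * f 0 ζ| ≤ M₂ := by
      rw [abs_mul, abs_of_nonneg (Real.exp_pos _).le]
      have he : Real.exp (-(ν ζ * x) / |ζ 0|) ≤ 1 := by
        rw [Real.exp_le_one_iff]
        apply div_nonpos_of_nonpos_of_nonneg _ (abs_nonneg _)
        nlinarith
      have h2 := h0 ζ hpos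
      nlinarith [abs_nonneg (f 0 ζ)]
    have hboundfun : IntervalIntegrable
        (fun s => (1/|ζ 0|) * Real.exp (-(ν ζ * (x - s)) / |ζ 0|) * Dp) volume 0 x :=
      (by fun_prop : Continuous
        fun s => (1/|ζ 0|) * Real.exp (-(ν ζ * (x - s)) / |ζ 0|) * Dp).intervalIntegrable 0 x
    have hptle : ∀ s ∈ Set.uIoc (0:ℝ) x,
        ‖(1/|ζ 0|) * Real.exp (-(ν ζ * (x - s)) / |ζ 0|) * Kop k (f s) ζ‖ ≤
        (1/|ζ 0|) * Real.exp (-(ν ζ * (x - s)) / |ζ 0|) * Dp := by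
      intro s hsI
      rw [Set.uIoc_of_le hx0] at hsI
      have hsIcc : s ∈ Icc (0:ℝ) l := ⟨hsI.1.le, hsI.2.trans hxl⟩
      rw [Real.norm_eq_abs, abs_mul, abs_mul,
        abs_of_nonneg (by positivity : (0:ℝ) ≤ 1/|ζ 0|), abs_of_nonneg (Real.exp_pos _).le]
      exact mul_le_mul_of_nonneg_left (hKb s hsIcc) (by positivity)
    have hibound := (intervalIntegral.norm_integral_le_of_norm_le hx0
      (ae_of_all _ fun t ht => hptle t (by rwa [Set.uIoc_of_le hx0])) hboundfun).trans
      (le_abs_self _)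
    have hexp : ∫ s in (0:ℝ)..x, (1/|ζ 0|) * Real.exp (-(ν ζ * (x - s)) / |ζ 0|) * Dp =
        (∫ s in (0:ℝ)..x, (1/|ζ 0|) * Real.exp (-(ν ζ * (x - s)) / |ζ 0|)) * Dp :=
      intervalIntegral.integral_mul_const _ _
    have hcomp : ∫ s in (0:ℝ)..x, (1/|ζ 0|) * Real.exp (-(ν ζ * (x - s)) / |ζ 0|) =
        ∫ u in (x - x)..(x - 0), (1/|ζ 0|) * Real.exp (-(ν ζ * u) / |ζ 0|) :=
      intervalIntegral.integral_comp_sub_left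
        (fun u => (1/|ζ 0|) * Real.exp (-(ν ζ * u) / |ζ 0|)) x
    have hinner_le :
        ∫ s in (0:ℝ)..x, (1/|ζ 0|) * Real.exp (-(ν ζ * (x - s)) / |ζ 0|) ≤ 1/(ν ζ) := by
      rw [hcomp, sub_self, sub_zero]
      exact aux_exp_integral (ν ζ) |ζ 0| x ha hc
    have hinner_nonneg :
        0 ≤ ∫ s in (0:ℝ)..x, (1/|ζ 0|) * Real.exp (-(ν ζ * (x - s)) / |ζ 0|) :=
      intervalIntegral.integral_nonneg hx0 (fun u _ => by positivity)
    calc |Real.exp (-(ν ζ * x) / |ζ 0|) * f 0 ζ +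
          ∫ s in (0:ℝ)..x, (1/|ζ 0|) * Real.exp (-(ν ζ * (x - s)) / |ζ 0|) * Kop k (f s) ζ|
        ≤ M₂ + |∫ s in (0:ℝ)..x,
            (1/|ζ 0|) * Real.exp (-(ν ζ * (x - s)) / |ζ 0|) * Kop k (f s) ζ| :=
          le_trans (abs_add_le _ _) (by gcongr)
      _ ≤ M₂ + |∫ s in (0:ℝ)..x, (1/|ζ 0|) * Real.exp (-(ν ζ * (x - s)) / |ζ 0|) * Dp| := by
          have := hibound; rw [Real.norm_eq_abs] at this; linarith
      _ ≤ M₂ + (1/ν₀) * D := by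
          rw [hexp, abs_of_nonneg (mul_nonneg hinner_nonneg hDp0)]
          have := mul_le_mul (hinner_le.trans hcb) hDple hDp0 (by positivity)
          linarith
      _ ≤ (1 + q) * (M₁ + M₂ + M₃) := by linarith
end
end

section
/- For every a ≥ 0 there is a constant C_a, depending only on a, γ, ν₀, ν₁, such that for every multi-index α and every 0 < t ≤ 1: ∫_{ζ₁>0} (1+|ζ|)^a |φ_α(ζ)| (ν(ζ)/ζ₁²) e^{−ν(ζ)t/ζ₁} dζ ≤ C_a A_α t^{−1}(1+|ln t|). -/
open MeasureTheory Real Set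

noncomputable section

open Filter
set_option maxHeartbeats 1000000

lemma rpow_mul_exp_neg_le {c y : ℝ} (hc : 0 ≤ c) (hy : 0 ≤ y) :
    y ^ c * Real.exp (-y) ≤ c ^ c * Real.exp (-c) := by
  rcases eq_or_lt_of_le hc with h0 | hc
  · rw [← h0]
    simp only [Real.rpow_zero, one_mul, Real.exp_zero, mul_one]
    exact Real.exp_le_exp.2 (by linarith)
  rcases eq_or_lt_of_le hy with h0 | hy
  · rw [← h0, Real.zero_rpow (ne_of_gt hc), zero_mul]
    positivity
  · rw [Real.rpow_def_of_pos hy, Real.rpow_def_of_pos hc, ← Real.exp_add, ← Real.exp_add,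
      Real.exp_le_exp]
    have h1 : Real.log (y / c) ≤ y / c - 1 := Real.log_le_sub_one_of_pos (by positivity)
    rw [Real.log_div (ne_of_gt hy) (ne_of_gt hc)] at h1
    have h2 : c * (Real.log y - Real.log c) ≤ c * (y / c - 1) :=
      mul_le_mul_of_nonneg_left h1 hc.le
    have h3 : c * (y / c - 1) = y - c := by field_simp
    nlinarith

lemma abs_pow_mul_exp_le (n : ℕ) (x : ℝ) :
    |x| ^ n * Real.exp (-(x ^ 2) / 4) ≤ (2 * (n : ℝ)) ^ ((n : ℝ) / 2) * Real.exp (-(n : ℝ) / 2) := by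
  have hx2 : (0 : ℝ) ≤ x ^ 2 / 4 := by positivity
  have h1 : |x| ^ n = (4 : ℝ) ^ ((n : ℝ) / 2) * (x ^ 2 / 4) ^ ((n : ℝ) / 2) := by
    rw [← Real.mul_rpow (by norm_num) hx2]
    rw [show (4 : ℝ) * (x ^ 2 / 4) = x ^ 2 by ring]
    rw [show ((n : ℝ) / 2) = (1 / 2) * (n : ℕ) by ring]
    rw [Real.rpow_mul (sq_nonneg x), Real.rpow_natCast]
    rw [show ((x ^ 2 : ℝ) ^ ((1 : ℝ) / 2)) = |x| by
      rw [← Real.sqrt_eq_rpow, Real.sqrt_sq_eq_abs]]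
  have key := rpow_mul_exp_neg_le (c := (n : ℝ) / 2) (by positivity) hx2
  have h2 : Real.exp (-(x ^ 2) / 4) = Real.exp (-(x ^ 2 / 4)) := by ring_nf
  have h3 : ((2 : ℝ) * n) ^ ((n : ℝ) / 2)
      = (4 : ℝ) ^ ((n : ℝ) / 2) * ((n : ℝ) / 2) ^ ((n : ℝ) / 2) := by
    rw [← Real.mul_rpow (by norm_num) (by positivity)]
    congr 1; ring
  rw [h1, h2, h3, show -(n : ℝ) / 2 = -((n : ℝ) / 2) by ring, mul_assoc, mul_assoc]
  exact mul_le_mul_of_nonneg_left key (by positivity)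

lemma weight_bound {b s : ℝ} (hb : 0 ≤ b) (hs : 0 ≤ s) :
    (1 + s) ^ b * Real.exp (-(s ^ 2) / 8) ≤ Real.exp (2 * b ^ 2) := by
  have h0 : (0 : ℝ) < 1 + s := by linarith
  have h1 : Real.log (1 + s) ≤ s := by
    have := Real.log_le_sub_one_of_pos h0; linarith
  rw [Real.rpow_def_of_pos h0, ← Real.exp_add, Real.exp_le_exp]
  nlinarith [sq_nonneg (s - 4 * b), mul_le_mul_of_nonneg_right h1 hb]

lemma integral_aux {c : ℝ} (hc : 0 < c) :
    IntegrableOn (fun x : ℝ => Real.exp (-(c / x)) / x ^ 2) (Ioi 0) volume ∧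
    ∫ x in Ioi (0 : ℝ), Real.exp (-(c / x)) / x ^ 2 = 1 / c := by
  set g : ℝ → ℝ := fun x => if x ≤ 0 then 0 else (1 / c) * Real.exp (-(c / x)) with hg
  have hderiv : ∀ x ∈ Ioi (0 : ℝ), HasDerivAt g (Real.exp (-(c / x)) / x ^ 2) x := by
    intro x hx
    have hx0 : (0 : ℝ) < x := hx
    have h1 : HasDerivAt (fun y : ℝ => -(c / y)) (c / x ^ 2) x := by
      have h2 := ((hasDerivAt_inv (ne_of_gt hx0)).const_mul c).neg
      have he : -(c * -(x ^ 2)⁻¹) = c / x ^ 2 := by field_simp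
      rw [he] at h2
      exact h2.congr_of_eventuallyEq (Filter.Eventually.of_forall (fun y => by
        simp [div_eq_mul_inv]))
    have h4 : HasDerivAt (fun y : ℝ => (1 / c) * Real.exp (-(c / y)))
        ((1 / c) * (Real.exp (-(c / x)) * (c / x ^ 2))) x := (h1.exp).const_mul (1 / c)
    have h5 : (1 / c) * (Real.exp (-(c / x)) * (c / x ^ 2)) = Real.exp (-(c / x)) / x ^ 2 := by
      field_simp
    rw [h5] at h4
    apply h4.congr_of_eventuallyEq
    filter_upwards [Ioi_mem_nhds hx0] with y hy
    simp [hg, not_le.2 (show (0 : ℝ) < y from hy)]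
  have hcont : ContinuousWithinAt g (Ici 0) 0 := by
    rw [← Set.Ioi_insert]
    rw [continuousWithinAt_insert_self]
    have hg0 : g 0 = 0 := by simp [hg]
    unfold ContinuousWithinAt
    rw [hg0]
    have t1 : Tendsto (fun x : ℝ => c / x) (nhdsWithin 0 (Ioi 0)) atTop := by
      simpa [div_eq_mul_inv] using tendsto_inv_nhdsGT_zero.const_mul_atTop hc
    have t2 : Tendsto (fun x : ℝ => -(c / x)) (nhdsWithin 0 (Ioi 0)) atBot :=
      tendsto_neg_atTop_atBot.comp t1
    have t3 : Tendsto (fun x : ℝ => Real.exp (-(c / x))) (nhdsWithin 0 (Ioi 0)) (nhds 0) :=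
      Real.tendsto_exp_atBot.comp t2
    have t4 := t3.const_mul (1 / c)
    rw [mul_zero] at t4
    apply t4.congr'
    filter_upwards [self_mem_nhdsWithin] with y hy
    simp [hg, not_le.2 (show (0 : ℝ) < y from hy)]
  have htop : Tendsto g atTop (nhds (1 / c)) := by
    have t1 : Tendsto (fun x : ℝ => -(c / x)) atTop (nhds 0) := by
      simpa using (tendsto_const_nhds.div_atTop tendsto_id (a := c)).neg
    have t2 : Tendsto (fun x : ℝ => Real.exp (-(c / x))) atTop (nhds 1) := by
      simpa [Function.comp_def] using (Real.continuous_exp.tendsto 0).comp t1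
    have t3 := t2.const_mul (1 / c)
    rw [mul_one] at t3
    apply t3.congr'
    filter_upwards [Ioi_mem_atTop 0] with y hy
    simp [hg, not_le.2 (show (0 : ℝ) < y from hy)]
  have hpos : ∀ x ∈ Ioi (0 : ℝ), 0 ≤ Real.exp (-(c / x)) / x ^ 2 := fun x _ => by positivity
  refine ⟨integrableOn_Ioi_deriv_of_nonneg hcont hderiv hpos htop, ?_⟩
  rw [integral_Ioi_of_hasDerivAt_of_nonneg hcont hderiv hpos htop]
  simp [hg]

/-- ‖φ_α ν(ζ)/ζ₁² e^{-ν t/ζ₁}‖_{L¹_a({ζ₁>0})} ≤ C_a A_α t⁻¹(1+|ln t|),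
with C_a depending only on a, γ, ν₀, ν₁. -/
theorem stmt10 (γ ν₀ ν₁ a : ℝ) (hγ0 : 0 < γ) (hγ1 : γ ≤ 1) (hν₀ : 0 < ν₀) (hν₀₁ : ν₀ < ν₁)
    (ha : 0 ≤ a) :
    ∃ Ca > (0 : ℝ), ∀ ν : (Fin 3 → ℝ) → ℝ, Measurable ν →
      (∀ ζ, ν₀ * (1 + enr ζ) ^ γ ≤ ν ζ ∧ ν ζ ≤ ν₁ * (1 + enr ζ) ^ γ) →
      ∀ (α : Fin 3 → ℕ) (t : ℝ), 0 < t → t ≤ 1 →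
        (∫ ζ in {ζ : Fin 3 → ℝ | 0 < ζ 0},
            (1 + enr ζ) ^ a * |phiα α ζ| * (ν ζ / (ζ 0) ^ 2) * Real.exp (-(ν ζ * t) / ζ 0)) ≤
          Ca * Aα α * t⁻¹ * (1 + |Real.log t|) := by
  have hν₁ : 0 < ν₁ := lt_trans hν₀ hν₀₁
  have hπ : (0 : ℝ) < Real.pi ^ (-(3 : ℝ) / 4) := Real.rpow_pos_of_pos Real.pi_pos _
  set E : ℝ := Real.exp (2 * (a + 1) ^ 2) with hE
  set K : ℝ := Real.pi ^ (-(3 : ℝ) / 4) * ν₁ * E with hK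
  have hKpos : 0 < K := by
    apply mul_pos (mul_pos hπ hν₁) (Real.exp_pos _)
  set h : ℝ → ℝ := fun y => Real.exp (-(y ^ 2) / 8) with hh
  have hInt : Integrable h := by
    have h1 : Integrable (fun y : ℝ => Real.exp (-((1 : ℝ) / 8) * y ^ 2)) :=
      integrable_exp_neg_mul_sq (by norm_num)
    have h2 : h = fun y : ℝ => Real.exp (-((1 : ℝ) / 8) * y ^ 2) := by
      funext y; rw [hh]; ring_nf
    rw [h2]; exact h1
  set G : ℝ := ∫ y, h y with hG
  have hGpos : 0 < G := by
    rw [hG, integral_pos_iff_support_of_nonneg (fun y => (Real.exp_pos _).le) hInt]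
    have hsupp : Function.support h = Set.univ :=
      Set.eq_univ_of_forall (fun y => (Real.exp_pos _).ne')
    rw [hsupp, Real.volume_univ]
    exact ENNReal.zero_lt_top
  refine ⟨K * G ^ 2 / ν₀, by positivity, ?_⟩
  intro ν hνm hν α t ht ht1
  set c : ℝ := ν₀ * t with hc
  have hcpos : 0 < c := mul_pos hν₀ ht
  obtain ⟨hf₀int', hf₀val⟩ := integral_aux hcpos
  set f₀ : ℝ → ℝ := (Ioi (0 : ℝ)).indicator (fun x => Real.exp (-(c / x)) / x ^ 2) with hf₀
  have hf₀int : Integrable f₀ := (integrable_indicator_iff measurableSet_Ioi).2 hf₀int'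
  have hf₀nn : ∀ x, 0 ≤ f₀ x := fun x =>
    Set.indicator_nonneg (fun y _ => by positivity) x
  set gd : Fin 3 → ℝ → ℝ := ![f₀, h, h] with hgd
  have hgint : ∀ i, Integrable (gd i) := by
    intro i; fin_cases i
    · exact hf₀int
    · exact hInt
    · exact hInt
  have hgnn : ∀ i x, 0 ≤ gd i x := by
    intro i; fin_cases i
    · exact hf₀nn
    · intro x; exact (Real.exp_pos _).le
    · intro x; exact (Real.exp_pos _).le
  set F : (Fin 3 → ℝ) → ℝ := fun ζ => K * Aα α * ∏ i, gd i (ζ i) with hF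
  have hFint : Integrable F := (Integrable.fintype_prod hgint).const_mul _
  have hAαnn : 0 ≤ Aα α := by
    unfold Aα; positivity
  -- the key pointwise estimate
  have key : ∀ ζ : Fin 3 → ℝ, 0 < ζ 0 →
      (1 + enr ζ) ^ a * |phiα α ζ| * (ν ζ / (ζ 0) ^ 2) * Real.exp (-(ν ζ * t) / ζ 0) ≤
        K * Aα α * (f₀ (ζ 0) * (h (ζ 1) * h (ζ 2))) := by
    intro ζ hζ
    set r : ℝ := enr ζ with hrdef
    have hr : 0 ≤ r := Real.sqrt_nonneg _
    have hr2 : r ^ 2 = ζ 0 ^ 2 + ζ 1 ^ 2 + ζ 2 ^ 2 := Real.sq_sqrt (by positivity)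
    have h1r : (0 : ℝ) < 1 + r := by linarith
    have hνl : ν₀ ≤ ν ζ := by
      have h1 : (1 : ℝ) ≤ (1 + r) ^ γ := Real.one_le_rpow (by linarith) hγ0.le
      have h2 := (hν ζ).1
      nlinarith
    have hνnn : 0 ≤ ν ζ := hν₀.le.trans hνl
    have hνu : ν ζ ≤ ν₁ * (1 + r) := by
      have h1 : (1 + r) ^ γ ≤ (1 + r) ^ (1 : ℝ) :=
        Real.rpow_le_rpow_of_exponent_le (by linarith) hγ1
      rw [Real.rpow_one] at h1
      have h2 := (hν ζ).2
      nlinarith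
    have stepA : |phiα α ζ| = Real.pi ^ (-(3 : ℝ) / 4) *
        (|ζ 0| ^ (α 0) * |ζ 1| ^ (α 1) * |ζ 2| ^ (α 2)) * Real.exp (-(r ^ 2) / 2) := by
      simp only [phiα, ← hrdef]
      rw [abs_mul, abs_mul, abs_mul, abs_mul, abs_pow, abs_pow, abs_pow, Real.abs_exp,
        abs_of_pos hπ]
      ring_nf
    have step1 : Real.exp (-(ν ζ * t) / ζ 0) ≤ Real.exp (-(c / ζ 0)) := by
      apply Real.exp_le_exp.2
      rw [neg_div, neg_le_neg_iff]
      gcongr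
      rw [hc]; exact mul_le_mul_of_nonneg_right hνl ht.le
    have step2 : ν ζ / (ζ 0) ^ 2 ≤ ν₁ * (1 + r) / (ζ 0) ^ 2 := by
      gcongr
    have eexp : Real.exp (-(r ^ 2) / 2) =
        (Real.exp (-(ζ 0 ^ 2) / 4) * Real.exp (-(ζ 1 ^ 2) / 4) * Real.exp (-(ζ 2 ^ 2) / 4)) *
          Real.exp (-(r ^ 2) / 8) *
          (Real.exp (-(ζ 0 ^ 2) / 8) * (Real.exp (-(ζ 1 ^ 2) / 8) * Real.exp (-(ζ 2 ^ 2) / 8))) := by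
      rw [← Real.exp_add, ← Real.exp_add, ← Real.exp_add, ← Real.exp_add, ← Real.exp_add,
        ← Real.exp_add]
      congr 1
      linarith [hr2]
    -- per-coordinate bound
    have b1 : (|ζ 0| ^ (α 0) * Real.exp (-(ζ 0 ^ 2) / 4)) *
        ((|ζ 1| ^ (α 1) * Real.exp (-(ζ 1 ^ 2) / 4)) *
          (|ζ 2| ^ (α 2) * Real.exp (-(ζ 2 ^ 2) / 4))) ≤ Aα α := by
      have hAeq : Aα α =
          ((2 * (α 0 : ℝ)) ^ ((α 0 : ℝ) / 2) * Real.exp (-(α 0 : ℝ) / 2)) *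
            (((2 * (α 1 : ℝ)) ^ ((α 1 : ℝ) / 2) * Real.exp (-(α 1 : ℝ) / 2)) *
              ((2 * (α 2 : ℝ)) ^ ((α 2 : ℝ) / 2) * Real.exp (-(α 2 : ℝ) / 2))) := by
        unfold Aα
        rw [show -((α 0 : ℝ) + (α 1 : ℝ) + (α 2 : ℝ)) / 2 =
          (-(α 0 : ℝ) / 2) + ((-(α 1 : ℝ) / 2) + (-(α 2 : ℝ) / 2)) by ring,
          Real.exp_add, Real.exp_add]
        ring
      rw [hAeq]
      apply mul_le_mul (abs_pow_mul_exp_le (α 0) (ζ 0))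
      · apply mul_le_mul (abs_pow_mul_exp_le (α 1) (ζ 1)) (abs_pow_mul_exp_le (α 2) (ζ 2))
          (by positivity) (by positivity)
      · positivity
      · positivity
    have b2 : (1 + r) ^ a * (1 + r) * Real.exp (-(r ^ 2) / 8) ≤ E := by
      have hre : (1 + r) ^ a * (1 + r) = (1 + r) ^ (a + 1) := by
        rw [Real.rpow_add h1r, Real.rpow_one]
      rw [hre, hE]
      exact weight_bound (by linarith) hr
    have b3 : Real.exp (-(ζ 0 ^ 2) / 8) ≤ 1 := by
      rw [show (1 : ℝ) = Real.exp 0 from (Real.exp_zero).symm]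
      apply Real.exp_le_exp.2
      nlinarith [sq_nonneg (ζ 0)]
    have hABnn : 0 ≤ (1 + r) ^ a * |phiα α ζ| :=
      mul_nonneg (Real.rpow_nonneg (by linarith) a) (abs_nonneg _)
    calc (1 + r) ^ a * |phiα α ζ| * (ν ζ / (ζ 0) ^ 2) * Real.exp (-(ν ζ * t) / ζ 0)
        = ((1 + r) ^ a * |phiα α ζ|) * ((ν ζ / (ζ 0) ^ 2) * Real.exp (-(ν ζ * t) / ζ 0)) := by
          ring
      _ ≤ ((1 + r) ^ a * |phiα α ζ|) * ((ν₁ * (1 + r) / (ζ 0) ^ 2) * Real.exp (-(c / ζ 0))) := by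
          apply mul_le_mul_of_nonneg_left _ hABnn
          apply mul_le_mul step2 step1 (Real.exp_pos _).le (by positivity)
      _ = (Real.pi ^ (-(3 : ℝ) / 4) * ν₁) *
            ((|ζ 0| ^ (α 0) * Real.exp (-(ζ 0 ^ 2) / 4)) *
              ((|ζ 1| ^ (α 1) * Real.exp (-(ζ 1 ^ 2) / 4)) *
                (|ζ 2| ^ (α 2) * Real.exp (-(ζ 2 ^ 2) / 4))) *
             ((1 + r) ^ a * (1 + r) * Real.exp (-(r ^ 2) / 8)) *
             Real.exp (-(ζ 0 ^ 2) / 8)) *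
            ((Real.exp (-(ζ 1 ^ 2) / 8) * Real.exp (-(ζ 2 ^ 2) / 8)) *
              (Real.exp (-(c / ζ 0)) / (ζ 0) ^ 2)) := by
          rw [stepA, eexp]; ring
      _ ≤ (Real.pi ^ (-(3 : ℝ) / 4) * ν₁) * (Aα α * E * 1) *
            ((Real.exp (-(ζ 1 ^ 2) / 8) * Real.exp (-(ζ 2 ^ 2) / 8)) *
              (Real.exp (-(c / ζ 0)) / (ζ 0) ^ 2)) := by
          apply mul_le_mul_of_nonneg_right _ (by positivity)
          apply mul_le_mul_of_nonneg_left _ (mul_nonneg hπ.le hν₁.le)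
          apply mul_le_mul _ b3 (Real.exp_pos _).le (by positivity)
          exact mul_le_mul b1 b2 (by positivity) hAαnn
      _ = K * Aα α * (f₀ (ζ 0) * (h (ζ 1) * h (ζ 2))) := by
          rw [hf₀, Set.indicator_of_mem (show ζ 0 ∈ Ioi (0 : ℝ) from hζ), hK, hh]
          ring
  have hS : MeasurableSet {ζ : Fin 3 → ℝ | 0 < ζ 0} :=
    measurableSet_lt measurable_const (measurable_pi_apply 0)
  rw [← MeasureTheory.integral_indicator hS]
  have hmono : (∫ ζ, ({ζ : Fin 3 → ℝ | 0 < ζ 0}).indicator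
      (fun ζ => (1 + enr ζ) ^ a * |phiα α ζ| * (ν ζ / (ζ 0) ^ 2) *
        Real.exp (-(ν ζ * t) / ζ 0)) ζ) ≤ ∫ ζ, F ζ := by
    apply integral_mono_of_nonneg
    · apply Filter.Eventually.of_forall
      intro ζ
      apply Set.indicator_nonneg
      intro ζ' hζ'
      have hν' : 0 ≤ ν ζ' := by
        have h1 : (0 : ℝ) ≤ ν₀ * (1 + enr ζ') ^ γ := by
          apply mul_nonneg hν₀.le (Real.rpow_nonneg _ _)
          have := Real.sqrt_nonneg (ζ' 0 ^ 2 + ζ' 1 ^ 2 + ζ' 2 ^ 2)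
          unfold enr; linarith
        linarith [(hν ζ').1]
      have h2 : (0 : ℝ) ≤ (1 + enr ζ') ^ a := Real.rpow_nonneg (by
        have := Real.sqrt_nonneg (ζ' 0 ^ 2 + ζ' 1 ^ 2 + ζ' 2 ^ 2)
        unfold enr; linarith) a
      have h3 : (0 : ℝ) ≤ ν ζ' / (ζ' 0) ^ 2 := div_nonneg hν' (sq_nonneg _)
      have h4 : (0 : ℝ) ≤ Real.exp (-(ν ζ' * t) / ζ' 0) := (Real.exp_pos _).le
      positivity
    · exact hFint
    · apply Filter.Eventually.of_forall
      intro ζ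
      by_cases hζ : ζ ∈ {ζ : Fin 3 → ℝ | 0 < ζ 0}
      · rw [Set.indicator_of_mem hζ]
        have := key ζ hζ
        simp only [hF, Fin.prod_univ_three, hgd, Matrix.cons_val_zero, Matrix.cons_val_one,
          Matrix.head_cons]
        have h2v : (![f₀, h, h] : Fin 3 → ℝ → ℝ) 2 = h := rfl
        rw [h2v]
        linarith [this]
      · rw [Set.indicator_of_notMem hζ]
        rw [hF]
        apply mul_nonneg (mul_nonneg hKpos.le hAαnn)
        exact Finset.prod_nonneg (fun i _ => hgnn i (ζ i))
  apply le_trans hmono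
  have hFval : (∫ ζ, F ζ) = K * Aα α * ((1 / c) * (G * G)) := by
    rw [hF]
    rw [MeasureTheory.integral_const_mul]
    rw [MeasureTheory.integral_fintype_prod_volume_eq_prod (ι := Fin 3) gd]
    rw [Fin.prod_univ_three]
    have e0 : (∫ x, gd 0 x) = 1 / c := by
      have hv : gd 0 = f₀ := rfl
      rw [hv, hf₀, MeasureTheory.integral_indicator measurableSet_Ioi, hf₀val]
    have e1 : (∫ x, gd 1 x) = G := by
      have hv : gd 1 = h := rfl
      rw [hv, hG]
    have e2 : (∫ x, gd 2 x) = G := by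
      have hv : gd 2 = h := rfl
      rw [hv, hG]
    rw [e0, e1, e2]
    ring
  rw [hFval]
  have heq : K * Aα α * ((1 / c) * (G * G)) = K * G ^ 2 / ν₀ * Aα α * t⁻¹ := by
    rw [hc]; field_simp
  rw [heq]
  have h1log : (1 : ℝ) ≤ 1 + |Real.log t| := by
    have := abs_nonneg (Real.log t); linarith
  have hnn : 0 ≤ K * G ^ 2 / ν₀ * Aα α * t⁻¹ := by
    apply mul_nonneg (mul_nonneg (by positivity) hAαnn) (inv_nonneg.2 ht.le)
  exact le_mul_of_one_le_right hnn h1log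
end
end

section
/- There is a constant C, depending only on γ, ν₀, ν₁, such that for every multi-index α and every 0 < t ≤ 1: (∫_{ζ₁>0} |φ_α(ζ)|² (ν(ζ)/ζ₁²)² e^{−2ν(ζ)t/ζ₁} dζ)^{1/2} ≤ C A_α t^{−3/2}(1+|ln t|)^{1/2}. -/
open MeasureTheory Real Set

noncomputable section

/-- key pointwise estimate: `|x|^a e^{-x²/4} ≤ (2a)^{a/2} e^{-a/2}`. -/
lemma key1 (a : ℕ) (x : ℝ) :
    |x| ^ a * Real.exp (-x ^ 2 / 4) ≤ (2 * (a : ℝ)) ^ ((a : ℝ) / 2) * Real.exp (-(a : ℝ) / 2) := by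
  rcases Nat.eq_zero_or_pos a with h | h
  · subst h
    simp only [Nat.cast_zero, pow_zero, one_mul, mul_zero, zero_div, Real.rpow_zero, neg_zero,
      Real.exp_zero]
    have : -x ^ 2 / 4 ≤ 0 := by nlinarith [sq_nonneg x]
    simpa using Real.exp_le_one_iff.2 this
  · have ha : (0 : ℝ) < a := by exact_mod_cast h
    rcases eq_or_ne x 0 with rfl | hx
    · have : |(0:ℝ)| ^ a = 0 := by simp [zero_pow (by omega : a ≠ 0)]
      rw [this, zero_mul]
      positivity
    · have hy : 0 < |x| := abs_pos.2 hx
      have hlog : Real.log (x ^ 2 / (2 * a)) ≤ x ^ 2 / (2 * a) - 1 :=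
        Real.log_le_sub_one_of_pos (by positivity)
      have hlog2 : Real.log (x ^ 2 / (2 * a)) = Real.log (x ^ 2) - Real.log (2 * a) :=
        Real.log_div (by positivity) (by positivity)
      have hlx : Real.log (x ^ 2) = 2 * Real.log |x| := by
        rw [← sq_abs, Real.log_pow]; push_cast; ring
      rw [hlog2, hlx] at hlog
      have e1 : (a : ℝ) / 2 * (x ^ 2 / (2 * a)) = x ^ 2 / 4 := by field_simp; ring
      rw [← Real.rpow_natCast |x| a, Real.rpow_def_of_pos hy,
        Real.rpow_def_of_pos (by positivity : (0:ℝ) < 2 * a), ← Real.exp_add, ← Real.exp_add,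
        Real.exp_le_exp]
      nlinarith [mul_le_mul_of_nonneg_left hlog (by positivity : (0:ℝ) ≤ (a : ℝ) / 2)]

lemma Aα_nonneg (α : Fin 3 → ℕ) : 0 ≤ Aα α := by unfold Aα; positivity

lemma key2 (α : Fin 3 → ℕ) (ζ : Fin 3 → ℝ) :
    |phiα α ζ| ≤ Real.pi ^ (-(3:ℝ)/4) * Aα α *
      Real.exp (-(ζ 0 ^ 2 + ζ 1 ^ 2 + ζ 2 ^ 2) / 4) := by
  have hS : enr ζ ^ 2 = ζ 0 ^ 2 + ζ 1 ^ 2 + ζ 2 ^ 2 := Real.sq_sqrt (by positivity)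
  have hpi : (0:ℝ) ≤ Real.pi ^ (-(3:ℝ)/4) := Real.rpow_nonneg Real.pi_pos.le _
  have hsplit : Real.exp (-(ζ 0 ^ 2 + ζ 1 ^ 2 + ζ 2 ^ 2) / 2) =
      Real.exp (-(ζ 0) ^ 2 / 4) * Real.exp (-(ζ 1) ^ 2 / 4) * Real.exp (-(ζ 2) ^ 2 / 4) *
        Real.exp (-(ζ 0 ^ 2 + ζ 1 ^ 2 + ζ 2 ^ 2) / 4) := by
    rw [← Real.exp_add, ← Real.exp_add, ← Real.exp_add, Real.exp_eq_exp]; ring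
  have hAsplit : Real.exp (-((α 0 : ℝ) + (α 1 : ℝ) + (α 2 : ℝ)) / 2) =
      Real.exp (-(α 0 : ℝ) / 2) * Real.exp (-(α 1 : ℝ) / 2) * Real.exp (-(α 2 : ℝ) / 2) := by
    rw [← Real.exp_add, ← Real.exp_add, Real.exp_eq_exp]; ring
  have heq : |phiα α ζ| = Real.pi ^ (-(3:ℝ)/4) *
      ((|ζ 0| ^ (α 0) * Real.exp (-(ζ 0) ^ 2 / 4)) * (|ζ 1| ^ (α 1) * Real.exp (-(ζ 1) ^ 2 / 4)) *
        (|ζ 2| ^ (α 2) * Real.exp (-(ζ 2) ^ 2 / 4)) *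
        Real.exp (-(ζ 0 ^ 2 + ζ 1 ^ 2 + ζ 2 ^ 2) / 4)) := by
    unfold phiα
    rw [hS, abs_mul, abs_mul, abs_mul, abs_mul, abs_of_nonneg hpi, abs_pow, abs_pow, abs_pow,
      Real.abs_exp, hsplit]
    ring
  have hle : (|ζ 0| ^ (α 0) * Real.exp (-(ζ 0) ^ 2 / 4)) *
        (|ζ 1| ^ (α 1) * Real.exp (-(ζ 1) ^ 2 / 4)) *
        (|ζ 2| ^ (α 2) * Real.exp (-(ζ 2) ^ 2 / 4)) ≤
      ((2 * (α 0 : ℝ)) ^ ((α 0 : ℝ) / 2) * Real.exp (-(α 0 : ℝ) / 2)) *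
        ((2 * (α 1 : ℝ)) ^ ((α 1 : ℝ) / 2) * Real.exp (-(α 1 : ℝ) / 2)) *
        ((2 * (α 2 : ℝ)) ^ ((α 2 : ℝ) / 2) * Real.exp (-(α 2 : ℝ) / 2)) := by
    have k0 := key1 (α 0) (ζ 0)
    have k1 := key1 (α 1) (ζ 1)
    have k2 := key1 (α 2) (ζ 2)
    exact mul_le_mul (mul_le_mul k0 k1 (by positivity) (by positivity)) k2 (by positivity)
      (by positivity)
  have final : Real.pi ^ (-(3:ℝ)/4) *
      ((|ζ 0| ^ (α 0) * Real.exp (-(ζ 0) ^ 2 / 4)) * (|ζ 1| ^ (α 1) * Real.exp (-(ζ 1) ^ 2 / 4)) *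
        (|ζ 2| ^ (α 2) * Real.exp (-(ζ 2) ^ 2 / 4)) *
        Real.exp (-(ζ 0 ^ 2 + ζ 1 ^ 2 + ζ 2 ^ 2) / 4)) ≤ Real.pi ^ (-(3:ℝ)/4) *
      (((2 * (α 0 : ℝ)) ^ ((α 0 : ℝ) / 2) * Real.exp (-(α 0 : ℝ) / 2)) *
        ((2 * (α 1 : ℝ)) ^ ((α 1 : ℝ) / 2) * Real.exp (-(α 1 : ℝ) / 2)) *
        ((2 * (α 2 : ℝ)) ^ ((α 2 : ℝ) / 2) * Real.exp (-(α 2 : ℝ) / 2)) *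
        Real.exp (-(ζ 0 ^ 2 + ζ 1 ^ 2 + ζ 2 ^ 2) / 4)) := by
    apply mul_le_mul_of_nonneg_left _ hpi
    exact mul_le_mul_of_nonneg_right hle (Real.exp_pos _).le
  rw [heq]
  refine final.trans (le_of_eq ?_)
  rw [Aα, hAsplit]; ring

lemma psi_meas (c : ℝ) : Measurable (fun x : ℝ => (1/x^4 + 1/x^2) * Real.exp (-c/x)) := by
  exact ((measurable_const.div (measurable_id.pow_const 4)).add
    (measurable_const.div (measurable_id.pow_const 2))).mul
    ((measurable_const.div measurable_id).exp)

lemma aux_int (c : ℝ) (hc : 0 < c) :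
    IntegrableOn (fun x : ℝ => (1/x^4 + 1/x^2) * Real.exp (-c/x)) (Ioi 0) := by
  have hmeas := psi_meas c
  have h01 : IntegrableOn (fun x : ℝ => (1/x^4 + 1/x^2) * Real.exp (-c/x)) (Ioc 0 1) := by
    apply Integrable.mono'
      (g := fun _ : ℝ => (6250:ℝ)/c^5)
      (integrableOn_const measure_Ioc_lt_top.ne)
      hmeas.aestronglyMeasurable
    filter_upwards [ae_restrict_mem measurableSet_Ioc] with x hx
    obtain ⟨hx0, hx1⟩ := hx
    have hex : Real.exp (-c/x) ≤ 3125 * x^5 / c^5 := by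
      have h1 : c/(5*x) ≤ Real.exp (c/(5*x)) := by
        have := Real.add_one_le_exp (c/(5*x)); linarith
      have h2 : (c/(5*x))^5 ≤ Real.exp (c/(5*x))^5 := pow_le_pow_left₀ (by positivity) h1 5
      have h3 : Real.exp (c/(5*x))^5 = Real.exp (c/x) := by
        rw [← Real.exp_nat_mul]; congr 1; field_simp; ring
      have h4 : (c/(5*x))^5 = c^5/(3125*x^5) := by rw [div_pow, mul_pow]; norm_num
      have h5 : Real.exp (-c/x) = (Real.exp (c/x))⁻¹ := by
        rw [← Real.exp_neg, Real.exp_eq_exp]; ring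
      have h6 : (3125:ℝ) * x^5 / c^5 = (c^5/(3125*x^5))⁻¹ := by
        field_simp
      rw [h5, h6]
      exact inv_anti₀ (by positivity) (by rw [← h4]; exact h2.trans_eq h3)
    have hsum : 1/x^4 + 1/x^2 ≤ 2 * (1/x^4) := by
      have h7 : x^4 ≤ x^2 := pow_le_pow_of_le_one hx0.le hx1 (by norm_num)
      have h8 : 1/x^2 ≤ 1/x^4 := one_div_le_one_div_of_le (by positivity) h7
      linarith
    rw [Real.norm_eq_abs, abs_of_nonneg (by positivity)]
    calc (1/x^4 + 1/x^2) * Real.exp (-c/x) ≤ (2 * (1/x^4)) * (3125 * x^5 / c^5) :=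
          mul_le_mul hsum hex (Real.exp_pos _).le (by positivity)
      _ = 6250 * x / c^5 := by field_simp; ring
      _ ≤ 6250 / c^5 := by
          rw [div_le_div_iff₀ (by positivity) (by positivity)]
          nlinarith [pow_pos hc 5]
  have h1i : IntegrableOn (fun x : ℝ => (1/x^4 + 1/x^2) * Real.exp (-c/x)) (Ioi 1) := by
    apply Integrable.mono'
      (g := fun x : ℝ => 2 * x ^ (-2:ℝ))
      ((integrableOn_Ioi_rpow_of_lt (by norm_num : (-2:ℝ) < -1) one_pos).const_mul 2)
      hmeas.aestronglyMeasurable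
    filter_upwards [ae_restrict_mem measurableSet_Ioi] with x hx
    have hx1 : (1:ℝ) < x := hx
    have hx0 : (0:ℝ) < x := lt_trans one_pos hx1
    have h2 : x ^ (-2:ℝ) = 1/x^2 := by
      rw [show (-2:ℝ) = -((2:ℕ):ℝ) by norm_num, Real.rpow_neg hx0.le, Real.rpow_natCast, one_div]
    have h14 : 1/x^4 ≤ 1/x^2 := by
      apply one_div_le_one_div_of_le (by positivity)
      exact pow_le_pow_right₀ hx1.le (by norm_num)
    have hexp1 : Real.exp (-c/x) ≤ 1 :=
      Real.exp_le_one_iff.2 (div_nonpos_of_nonpos_of_nonneg (neg_nonpos.2 hc.le) hx0.le)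
    rw [Real.norm_eq_abs, abs_of_nonneg (by positivity)]
    calc (1/x^4 + 1/x^2) * Real.exp (-c/x) ≤ (1/x^2 + 1/x^2) * 1 :=
          mul_le_mul (by linarith) hexp1 (Real.exp_pos _).le (by positivity)
      _ = 2 * x ^ (-2:ℝ) := by rw [h2]; ring
  have hu : Ioc (0:ℝ) 1 ∪ Ioi 1 = Ioi 0 := Ioc_union_Ioi_eq_Ioi zero_le_one
  rw [← hu]
  exact h01.union h1i

lemma aux_bound (c : ℝ) (hc : 0 < c) (t : ℝ) (ht : 0 < t) (ht1 : t ≤ 1) :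
    ∫ x in Ioi (0:ℝ), (1/x^4 + 1/x^2) * Real.exp (-(c*t)/x) ≤
      (t^3)⁻¹ * ∫ y in Ioi (0:ℝ), (1/y^4 + 1/y^2) * Real.exp (-c/y) := by
  have hcv := integral_comp_mul_left_Ioi
    (fun x : ℝ => (1/x^4 + 1/x^2) * Real.exp (-(c*t)/x)) 0 ht
  rw [mul_zero] at hcv
  have h0 : ∫ x in Ioi (0:ℝ), (1/x^4 + 1/x^2) * Real.exp (-(c*t)/x) =
      t * ∫ y in Ioi (0:ℝ),
        (1/(t*y)^4 + 1/(t*y)^2) * Real.exp (-(c*t)/(t*y)) := by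
    rw [hcv, smul_eq_mul, ← mul_assoc, mul_inv_cancel₀ ht.ne', one_mul]
  rw [h0]
  have h1 : ∀ y ∈ Ioi (0:ℝ),
      (1/(t*y)^4 + 1/(t*y)^2) * Real.exp (-(c*t)/(t*y)) =
        (t^4)⁻¹ * ((1/y^4 + t^2 * (1/y^2)) * Real.exp (-c/y)) := by
    intro y hy
    have hy0 : (0:ℝ) < y := hy
    have harg : -(c*t)/(t*y) = -c/y := by
      field_simp
    rw [harg]
    field_simp
  rw [setIntegral_congr_fun measurableSet_Ioi h1, integral_const_mul]
  have h2 : ∫ y in Ioi (0:ℝ), (1/y^4 + t^2 * (1/y^2)) * Real.exp (-c/y) ≤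
      ∫ y in Ioi (0:ℝ), (1/y^4 + 1/y^2) * Real.exp (-c/y) := by
    have hint2 : IntegrableOn
        (fun y : ℝ => (1/y^4 + t^2 * (1/y^2)) * Real.exp (-c/y)) (Ioi 0) := by
      apply Integrable.mono' (aux_int c hc)
      · exact (((measurable_const.div (measurable_id.pow_const 4)).add
          ((measurable_const.div (measurable_id.pow_const 2)).const_mul (t^2))).mul
          ((measurable_const.div measurable_id).exp)).aestronglyMeasurable
      · filter_upwards [ae_restrict_mem measurableSet_Ioi] with y hy
        have hy0 : (0:ℝ) < y := hy
        have ht2 : t^2 ≤ 1 := by nlinarith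
        have hb : (0:ℝ) ≤ 1/y^2 := by positivity
        rw [Real.norm_eq_abs, abs_of_nonneg (by positivity)]
        apply mul_le_mul_of_nonneg_right _ (Real.exp_pos _).le
        nlinarith
    apply setIntegral_mono_on hint2 (aux_int c hc) measurableSet_Ioi
    intro y hy
    have hy0 : (0:ℝ) < y := hy
    have ht2 : t^2 ≤ 1 := by nlinarith
    have hb : (0:ℝ) ≤ 1/y^2 := by positivity
    apply mul_le_mul_of_nonneg_right _ (Real.exp_pos _).le
    nlinarith
  have h3 : t * (t^4)⁻¹ = (t^3)⁻¹ := by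
    field_simp
  calc t * ((t^4)⁻¹ * ∫ y in Ioi (0:ℝ), (1/y^4 + t^2 * (1/y^2)) * Real.exp (-c/y))
      = (t^3)⁻¹ * ∫ y in Ioi (0:ℝ), (1/y^4 + t^2 * (1/y^2)) * Real.exp (-c/y) := by
        rw [← mul_assoc, h3]
    _ ≤ (t^3)⁻¹ * ∫ y in Ioi (0:ℝ), (1/y^4 + 1/y^2) * Real.exp (-c/y) :=
        mul_le_mul_of_nonneg_left h2 (by positivity)

set_option maxHeartbeats 1000000 in
lemma pointwise_bound (γ ν₀ ν₁ : ℝ) (hγ0 : 0 < γ) (hγ1 : γ ≤ 1) (hν₀ : 0 < ν₀) (hν₁ : 0 < ν₁)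
    (ν : (Fin 3 → ℝ) → ℝ)
    (hν : ∀ ζ, ν₀ * (1 + enr ζ) ^ γ ≤ ν ζ ∧ ν ζ ≤ ν₁ * (1 + enr ζ) ^ γ)
    (t : ℝ) (ht : 0 < t) (α : Fin 3 → ℕ) (ζ : Fin 3 → ℝ) (hζ : 0 < ζ 0) :
    |phiα α ζ| ^ 2 * (ν ζ / (ζ 0) ^ 2) ^ 2 * Real.exp (-(2 * ν ζ * t) / ζ 0) ≤
      Aα α ^ 2 * (2 * Real.pi ^ (-(3:ℝ)/2) * ν₁ ^ 2 *
        ((1/(ζ 0)^4 + 1/(ζ 0)^2) * Real.exp (-(2*ν₀*t)/(ζ 0)) *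
          ((1 + (ζ 1)^2) * Real.exp (-(1/2:ℝ) * (ζ 1)^2) *
            ((1 + (ζ 2)^2) * Real.exp (-(1/2:ℝ) * (ζ 2)^2))))) := by
  obtain ⟨hl, hu⟩ := hν ζ
  have henr : 0 ≤ enr ζ := Real.sqrt_nonneg _
  have hbase : (1:ℝ) ≤ 1 + enr ζ := by linarith
  have hrg1 : (1 + enr ζ) ^ γ ≤ 1 + enr ζ := by
    nth_rewrite 2 [← Real.rpow_one (1 + enr ζ)]
    exact Real.rpow_le_rpow_of_exponent_le hbase hγ1
  have hrgpos : (1:ℝ) ≤ (1 + enr ζ) ^ γ := by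
    have := Real.rpow_le_rpow_of_exponent_le hbase (le_of_lt hγ0 : (0:ℝ) ≤ γ)
    rwa [Real.rpow_zero] at this
  have hνpos : 0 < ν ζ := lt_of_lt_of_le (by positivity) hl
  have hν0le : ν₀ ≤ ν ζ := by nlinarith
  have hS : enr ζ ^ 2 = ζ 0 ^ 2 + ζ 1 ^ 2 + ζ 2 ^ 2 := Real.sq_sqrt (by positivity)
  -- step 1
  have hphi := key2 α ζ
  have h1 : |phiα α ζ| ^ 2 ≤
      (Real.pi ^ (-(3:ℝ)/4) * Aα α * Real.exp (-(ζ 0 ^ 2 + ζ 1 ^ 2 + ζ 2 ^ 2) / 4)) ^ 2 :=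
    pow_le_pow_left₀ (abs_nonneg _) hphi 2
  have e1 : (Real.pi ^ (-(3:ℝ)/4)) ^ 2 = Real.pi ^ (-(3:ℝ)/2) := by
    rw [← Real.rpow_natCast (Real.pi ^ (-(3:ℝ)/4)) 2, ← Real.rpow_mul Real.pi_pos.le]
    norm_num
  have e2 : (Real.exp (-(ζ 0 ^ 2 + ζ 1 ^ 2 + ζ 2 ^ 2) / 4)) ^ 2 =
      Real.exp (-(1/2:ℝ) * (ζ 0)^2) * Real.exp (-(1/2:ℝ) * (ζ 1)^2) *
        Real.exp (-(1/2:ℝ) * (ζ 2)^2) := by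
    rw [sq, ← Real.exp_add, ← Real.exp_add, ← Real.exp_add, Real.exp_eq_exp]; ring
  have h1' : (Real.pi ^ (-(3:ℝ)/4) * Aα α * Real.exp (-(ζ 0 ^ 2 + ζ 1 ^ 2 + ζ 2 ^ 2) / 4)) ^ 2 =
      Real.pi ^ (-(3:ℝ)/2) * Aα α ^ 2 *
        (Real.exp (-(1/2:ℝ) * (ζ 0)^2) * Real.exp (-(1/2:ℝ) * (ζ 1)^2) *
          Real.exp (-(1/2:ℝ) * (ζ 2)^2)) := by
    rw [show (Real.pi ^ (-(3:ℝ)/4) * Aα α * Real.exp (-(ζ 0 ^ 2 + ζ 1 ^ 2 + ζ 2 ^ 2) / 4)) ^ 2 =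
      (Real.pi ^ (-(3:ℝ)/4)) ^ 2 * Aα α ^ 2 *
        (Real.exp (-(ζ 0 ^ 2 + ζ 1 ^ 2 + ζ 2 ^ 2) / 4)) ^ 2 from by ring, e1, e2]
  -- step 2
  have hup : ν ζ ≤ ν₁ * (1 + enr ζ) :=
    hu.trans (mul_le_mul_of_nonneg_left hrg1 hν₁.le)
  have hsq : (ν ζ) ^ 2 ≤ ν₁ ^ 2 * (1 + enr ζ) ^ 2 := by nlinarith
  have he2 : (1 + enr ζ) ^ 2 ≤ 2 * (1 + (ζ 0)^2) * (1 + (ζ 1)^2) * (1 + (ζ 2)^2) := by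
    nlinarith [sq_nonneg (enr ζ - 1), sq_nonneg (ζ 0), sq_nonneg (ζ 1), sq_nonneg (ζ 2),
      mul_nonneg (sq_nonneg (ζ 0)) (sq_nonneg (ζ 1)),
      mul_nonneg (sq_nonneg (ζ 1)) (sq_nonneg (ζ 2)),
      mul_nonneg (sq_nonneg (ζ 0)) (sq_nonneg (ζ 2)),
      mul_nonneg (mul_nonneg (sq_nonneg (ζ 0)) (sq_nonneg (ζ 1))) (sq_nonneg (ζ 2))]
  have h2 : (ν ζ / (ζ 0) ^ 2) ^ 2 ≤
      ν₁ ^ 2 * (2 * (1 + (ζ 0)^2) * (1 + (ζ 1)^2) * (1 + (ζ 2)^2)) * (1/(ζ 0)^4) := by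
    have hdv : (ν ζ / (ζ 0) ^ 2) ^ 2 = (ν ζ) ^ 2 * (1/(ζ 0)^4) := by
      rw [div_pow, div_eq_mul_one_div]
      congr 2
      ring
    rw [hdv]
    apply mul_le_mul_of_nonneg_right _ (by positivity)
    calc (ν ζ) ^ 2 ≤ ν₁ ^ 2 * (1 + enr ζ) ^ 2 := hsq
      _ ≤ ν₁ ^ 2 * (2 * (1 + (ζ 0)^2) * (1 + (ζ 1)^2) * (1 + (ζ 2)^2)) :=
          mul_le_mul_of_nonneg_left he2 (sq_nonneg _)
  -- step 3
  have h3 : Real.exp (-(2 * ν ζ * t) / ζ 0) ≤ Real.exp (-(2 * ν₀ * t) / ζ 0) := by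
    apply Real.exp_le_exp.2
    rw [div_le_div_iff_of_pos_right hζ]
    nlinarith [mul_le_mul_of_nonneg_right hν0le ht.le]
  -- combine
  calc |phiα α ζ| ^ 2 * (ν ζ / (ζ 0) ^ 2) ^ 2 * Real.exp (-(2 * ν ζ * t) / ζ 0)
      ≤ (Real.pi ^ (-(3:ℝ)/4) * Aα α * Real.exp (-(ζ 0 ^ 2 + ζ 1 ^ 2 + ζ 2 ^ 2) / 4)) ^ 2 *
          (ν₁ ^ 2 * (2 * (1 + (ζ 0)^2) * (1 + (ζ 1)^2) * (1 + (ζ 2)^2)) * (1/(ζ 0)^4)) *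
          Real.exp (-(2 * ν₀ * t) / ζ 0) := by
        apply mul_le_mul (mul_le_mul h1 h2 (sq_nonneg _) (by positivity)) h3
          (Real.exp_pos _).le (by positivity)
    _ = (Aα α ^ 2 * (2 * Real.pi ^ (-(3:ℝ)/2) * ν₁ ^ 2 *
          ((1 + (ζ 1)^2) * Real.exp (-(1/2:ℝ) * (ζ 1)^2) *
            ((1 + (ζ 2)^2) * Real.exp (-(1/2:ℝ) * (ζ 2)^2)) *
            Real.exp (-(2*ν₀*t)/(ζ 0))))) *
          (Real.exp (-(1/2:ℝ) * (ζ 0)^2) * ((1 + (ζ 0)^2) * (1/(ζ 0)^4))) := by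
        rw [h1']
        ring
    _ ≤ (Aα α ^ 2 * (2 * Real.pi ^ (-(3:ℝ)/2) * ν₁ ^ 2 *
          ((1 + (ζ 1)^2) * Real.exp (-(1/2:ℝ) * (ζ 1)^2) *
            ((1 + (ζ 2)^2) * Real.exp (-(1/2:ℝ) * (ζ 2)^2)) *
            Real.exp (-(2*ν₀*t)/(ζ 0))))) *
          (1/(ζ 0)^4 + 1/(ζ 0)^2) := by
        apply mul_le_mul_of_nonneg_left _ (by positivity)
        have hEa : Real.exp (-(1/2:ℝ) * (ζ 0)^2) ≤ 1 :=
          Real.exp_le_one_iff.2 (by nlinarith [sq_nonneg (ζ 0)])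
        have heq : (1 + (ζ 0)^2) * (1/(ζ 0)^4) = 1/(ζ 0)^4 + 1/(ζ 0)^2 := by
          field_simp
        calc Real.exp (-(1/2:ℝ) * (ζ 0)^2) * ((1 + (ζ 0)^2) * (1/(ζ 0)^4))
            ≤ 1 * ((1 + (ζ 0)^2) * (1/(ζ 0)^4)) :=
              mul_le_mul_of_nonneg_right hEa (by positivity)
          _ = 1/(ζ 0)^4 + 1/(ζ 0)^2 := by rw [one_mul, heq]
    _ = Aα α ^ 2 * (2 * Real.pi ^ (-(3:ℝ)/2) * ν₁ ^ 2 *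
          ((1/(ζ 0)^4 + 1/(ζ 0)^2) * Real.exp (-(2*ν₀*t)/(ζ 0)) *
            ((1 + (ζ 1)^2) * Real.exp (-(1/2:ℝ) * (ζ 1)^2) *
              ((1 + (ζ 2)^2) * Real.exp (-(1/2:ℝ) * (ζ 2)^2))))) := by
        ring


set_option maxHeartbeats 1000000 in
/-- the L² bound ‖φ_α ν(ζ)/ζ₁² e^{-ν t/ζ₁}‖_{L²({ζ₁>0})}
≤ C A_α t^{-3/2}(1+|ln t|)^{1/2}, with C depending only on γ, ν₀, ν₁. -/
theorem stmt12 (γ ν₀ ν₁ : ℝ) (hγ0 : 0 < γ) (hγ1 : γ ≤ 1) (hν₀ : 0 < ν₀) (hν₀₁ : ν₀ < ν₁) :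
    ∃ C > (0 : ℝ), ∀ ν : (Fin 3 → ℝ) → ℝ, Measurable ν →
      (∀ ζ, ν₀ * (1 + enr ζ) ^ γ ≤ ν ζ ∧ ν ζ ≤ ν₁ * (1 + enr ζ) ^ γ) →
      ∀ (α : Fin 3 → ℕ) (t : ℝ), 0 < t → t ≤ 1 →
        Real.sqrt (∫ ζ in {ζ : Fin 3 → ℝ | 0 < ζ 0},
            |phiα α ζ| ^ 2 * (ν ζ / (ζ 0) ^ 2) ^ 2 * Real.exp (-(2 * ν ζ * t) / ζ 0)) ≤
          C * Aα α * t ^ (-(3 : ℝ) / 2) * (1 + |Real.log t|) ^ ((1 : ℝ) / 2) := by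
  have hν₁ : 0 < ν₁ := hν₀.trans hν₀₁
  set Kc : ℝ := 2 * Real.pi ^ (-(3:ℝ)/2) * ν₁ ^ 2 with hKc
  have hKcpos : 0 < Kc := by rw [hKc]; positivity
  set M₁ : ℝ := ∫ y in Ioi (0:ℝ), (1/y^4 + 1/y^2) * Real.exp (-(2*ν₀)/y) with hM₁
  set M₂ : ℝ := ∫ y : ℝ, (1 + y^2) * Real.exp (-(1/2:ℝ) * y^2) with hM₂
  have hM₁nn : 0 ≤ M₁ := by
    rw [hM₁]
    exact setIntegral_nonneg measurableSet_Ioi fun y _ => by positivity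
  have hM₂nn : 0 ≤ M₂ := by
    rw [hM₂]
    exact integral_nonneg fun y => by positivity
  refine ⟨Real.sqrt (Kc * M₁ * M₂^2) + 1, by positivity, ?_⟩
  intro ν hνm hν α t ht ht1
  set s : Set (Fin 3 → ℝ) := {ζ : Fin 3 → ℝ | 0 < ζ 0} with hs
  have hsmeas : MeasurableSet s := measurableSet_lt measurable_const (measurable_pi_apply 0)
  set G : (Fin 3 → ℝ) → ℝ := fun ζ =>
    |phiα α ζ| ^ 2 * (ν ζ / (ζ 0) ^ 2) ^ 2 * Real.exp (-(2 * ν ζ * t) / ζ 0) with hG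
  have hphic : Continuous (phiα α) := by
    unfold phiα enr
    fun_prop
  have hGmeas : Measurable G := by
    apply Measurable.mul
    apply Measurable.mul
    · exact (hphic.measurable.abs).pow_const 2
    · exact (hνm.div ((measurable_pi_apply 0).pow_const 2)).pow_const 2
    · exact ((((measurable_const.mul hνm).mul measurable_const).neg).div
        (measurable_pi_apply 0)).exp
  have hGnn : ∀ ζ, 0 ≤ G ζ := fun ζ => by rw [hG]; positivity
  set φt : ℝ → ℝ := fun x => (1/x^4 + 1/x^2) * Real.exp (-(2*ν₀*t)/x) with hφt
  set gfun : ℝ → ℝ := fun y => (1 + y^2) * Real.exp (-(1/2:ℝ) * y^2) with hgfun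
  have hφtint : IntegrableOn φt (Ioi 0) := aux_int (2*ν₀*t) (by positivity)
  have hgint : Integrable gfun := by
    have h1 : Integrable (fun y : ℝ => Real.exp (-(1/2:ℝ) * y^2)) :=
      integrable_exp_neg_mul_sq (by norm_num)
    have h2 : Integrable (fun y : ℝ => y^2 * Real.exp (-(1/2:ℝ) * y^2)) := by
      have h3 := integrable_rpow_mul_exp_neg_mul_sq (by norm_num : (0:ℝ) < 1/2)
        (by norm_num : (-1:ℝ) < 2)
      simp only [show ((2:ℝ)) = ((2:ℕ):ℝ) by norm_num, Real.rpow_natCast] at h3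
      convert h3 using 2
      norm_num
    refine (h1.add h2).congr (ae_of_all _ fun y => ?_)
    simp only [Pi.add_apply, hgfun]
    ring
  set f : Fin 3 → ℝ → ℝ := ![Set.indicator (Ioi 0) φt, gfun, gfun] with hf
  have hfint : ∀ i, Integrable (f i) := by
    intro i
    fin_cases i
    · simpa [hf] using (integrable_indicator_iff measurableSet_Ioi).2 hφtint
    · simpa [hf] using hgint
    · simpa [hf] using hgint
  have hφnn : ∀ y : ℝ, 0 ≤ φt y := fun y => by
    simp only [hφt]; positivity
  have hgnn : ∀ y : ℝ, 0 ≤ gfun y := fun y => by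
    simp only [hgfun]; positivity
  have hfnn : ∀ i x, 0 ≤ f i x := by
    intro i x
    fin_cases i
    · show (0:ℝ) ≤ (Ioi 0).indicator φt x
      exact Set.indicator_nonneg (fun y _ => hφnn y) x
    · exact hgnn x
    · exact hgnn x
  have hprod : Integrable (fun ζ : Fin 3 → ℝ => ∏ i, f i (ζ i)) :=
    Integrable.fintype_prod hfint
  set D : (Fin 3 → ℝ) → ℝ := fun ζ => (Aα α ^ 2 * Kc) * ∏ i, f i (ζ i) with hD
  have hDint : Integrable D := hprod.const_mul _
  have hDnn : ∀ ζ, 0 ≤ D ζ := fun ζ =>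
    mul_nonneg (mul_nonneg (sq_nonneg _) hKcpos.le)
      (Finset.prod_nonneg fun i _ => hfnn i _)
  have hle : ∀ ζ, Set.indicator s G ζ ≤ D ζ := by
    intro ζ
    by_cases hmem : ζ ∈ s
    · rw [Set.indicator_of_mem hmem]
      have hζ0 : 0 < ζ 0 := hmem
      have hpt := pointwise_bound γ ν₀ ν₁ hγ0 hγ1 hν₀ hν₁ ν hν t ht α ζ hζ0
      have hDval : D ζ = Aα α ^ 2 * (2 * Real.pi ^ (-(3:ℝ)/2) * ν₁ ^ 2 *
          ((1/(ζ 0)^4 + 1/(ζ 0)^2) * Real.exp (-(2*ν₀*t)/(ζ 0)) *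
            ((1 + (ζ 1)^2) * Real.exp (-(1/2:ℝ) * (ζ 1)^2) *
              ((1 + (ζ 2)^2) * Real.exp (-(1/2:ℝ) * (ζ 2)^2))))) := by
        rw [hD]
        simp only [hf, Fin.prod_univ_three, Matrix.cons_val_zero, Matrix.cons_val_one,
          Matrix.head_cons, Matrix.cons_val_two, Matrix.tail_cons,
          Set.indicator_of_mem (show ζ 0 ∈ Ioi (0:ℝ) from hζ0)]
        rw [hφt, hgfun, hKc]
        ring
      rw [hDval]
      exact hpt
    · rw [Set.indicator_of_notMem hmem]
      exact hDnn ζ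
  have hGind : Integrable (Set.indicator s G) := by
    apply hDint.mono' ((hGmeas.indicator hsmeas).aestronglyMeasurable)
    refine ae_of_all _ fun ζ => ?_
    rw [Real.norm_eq_abs, abs_of_nonneg (Set.indicator_nonneg (fun x _ => hGnn x) ζ)]
    exact hle ζ
  have hint_le : ∫ ζ in s, G ζ ≤ ∫ ζ, D ζ := by
    rw [← integral_indicator hsmeas]
    exact integral_mono hGind hDint hle
  have hDint_val : ∫ ζ, D ζ = (Aα α ^ 2 * Kc) * ((∫ x in Ioi (0:ℝ), φt x) * (M₂ * M₂)) := by
    rw [hD, integral_const_mul, integral_fin_nat_prod_volume_eq_prod f, Fin.prod_univ_three]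
    simp only [hf, Matrix.cons_val_zero, Matrix.cons_val_one, Matrix.head_cons,
      Matrix.cons_val_two, Matrix.tail_cons]
    rw [integral_indicator measurableSet_Ioi]
    rw [hM₂, hgfun]
    ring
  have hφt_le : ∫ x in Ioi (0:ℝ), φt x ≤ (t^3)⁻¹ * M₁ := by
    rw [hφt, hM₁]
    exact aux_bound (2*ν₀) (by positivity) t ht ht1
  have hφtnn : 0 ≤ ∫ x in Ioi (0:ℝ), φt x :=
    setIntegral_nonneg measurableSet_Ioi fun x _ => by rw [hφt]; positivity
  have htotal : ∫ ζ in s, G ζ ≤ Aα α ^ 2 * (Kc * M₁ * M₂^2) * (t^3)⁻¹ := by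
    refine hint_le.trans ?_
    rw [hDint_val]
    have hstep : (Aα α ^ 2 * Kc) * ((∫ x in Ioi (0:ℝ), φt x) * (M₂ * M₂)) ≤
        (Aα α ^ 2 * Kc) * (((t^3)⁻¹ * M₁) * (M₂ * M₂)) := by
      apply mul_le_mul_of_nonneg_left _ (mul_nonneg (sq_nonneg _) hKcpos.le)
      exact mul_le_mul_of_nonneg_right hφt_le (by positivity)
    refine hstep.trans (le_of_eq ?_)
    ring
  have hA := Aα_nonneg α
  have hKM : 0 ≤ Kc * M₁ * M₂^2 := by positivity
  refine (Real.sqrt_le_sqrt htotal).trans ?_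
  have h1 : Real.sqrt (Aα α ^ 2 * (Kc * M₁ * M₂^2) * (t^3)⁻¹) =
      Aα α * Real.sqrt (Kc * M₁ * M₂^2) * Real.sqrt ((t^3)⁻¹) := by
    rw [show Aα α ^ 2 * (Kc * M₁ * M₂^2) * (t^3)⁻¹ =
        (Aα α ^ 2) * ((Kc * M₁ * M₂^2) * (t^3)⁻¹) from by ring,
      Real.sqrt_mul (sq_nonneg _), Real.sqrt_sq hA, Real.sqrt_mul hKM]
    ring
  have h2 : Real.sqrt ((t^3)⁻¹) = t ^ (-(3:ℝ)/2) := by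
    rw [show ((t^3)⁻¹ : ℝ) = t ^ (-(3:ℝ)) from by
        rw [← Real.rpow_natCast t 3, ← Real.rpow_neg ht.le]; norm_num,
      Real.sqrt_eq_rpow, ← Real.rpow_mul ht.le]
    norm_num
  rw [h1, h2]
  have hC1 : Real.sqrt (Kc * M₁ * M₂^2) ≤ Real.sqrt (Kc * M₁ * M₂^2) + 1 :=
    le_add_of_nonneg_right zero_le_one
  have hlog : (1:ℝ) ≤ (1 + |Real.log t|) ^ ((1:ℝ)/2) := by
    calc (1:ℝ) = (1:ℝ) ^ ((1:ℝ)/2) := (Real.one_rpow _).symm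
      _ ≤ (1 + |Real.log t|) ^ ((1:ℝ)/2) :=
          Real.rpow_le_rpow (by norm_num) (by linarith [abs_nonneg (Real.log t)]) (by norm_num)
  have htp : (0:ℝ) ≤ t ^ (-(3:ℝ)/2) := Real.rpow_nonneg ht.le _
  calc Aα α * Real.sqrt (Kc * M₁ * M₂^2) * t ^ (-(3:ℝ)/2)
      ≤ Aα α * (Real.sqrt (Kc * M₁ * M₂^2) + 1) * t ^ (-(3:ℝ)/2) :=
        mul_le_mul_of_nonneg_right (mul_le_mul_of_nonneg_left hC1 hA) htp
    _ = ((Real.sqrt (Kc * M₁ * M₂^2) + 1) * Aα α * t ^ (-(3:ℝ)/2)) * 1 := by ring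
    _ ≤ ((Real.sqrt (Kc * M₁ * M₂^2) + 1) * Aα α * t ^ (-(3:ℝ)/2)) *
          (1 + |Real.log t|) ^ ((1:ℝ)/2) := by
        apply mul_le_mul_of_nonneg_left hlog
        exact mul_nonneg (mul_nonneg (by positivity) hA) htp
    _ = (Real.sqrt (Kc * M₁ * M₂^2) + 1) * Aα α * t ^ (-(3:ℝ)/2) *
          (1 + |Real.log t|) ^ ((1:ℝ)/2) := by ring
end
end

section
/- For every a ≥ 0 there are constants C and C_a, depending only on (a,) γ, ν₀, ν₁, such that for every multi-index α and every 0 < x ≤ 1: (i) ∫_{ζ₁>0} |φ_α(ζ)| ζ₁^{−1} e^{−ν(ζ)x/ζ₁} dζ ≤ C A_α (1+|ln x|); (ii) sup_{ζ₁>0} (1+|ζ|)^a |φ_α(ζ)| ζ₁^{−1} e^{−ν(ζ)x/ζ₁} ≤ C_a A_α x^{−1}; (iii) (∫_{ζ₁>0} |φ_α(ζ)|² ζ₁^{−2} e^{−2ν(ζ)x/ζ₁} dζ)^{1/2} ≤ C A_α x^{−1/2}(1+|ln x|)^{1/2}. -/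
open MeasureTheory Real Set

noncomputable section

lemma rpow_mul_exp_le (s p : ℝ) (hs : 0 ≤ s) (hp : 0 ≤ p) :
    s ^ p * Real.exp (-s) ≤ p ^ p * Real.exp (-p) := by
  rcases eq_or_lt_of_le hp with hp0 | hp0
  · subst hp0
    simp only [Real.rpow_zero, one_mul, neg_zero, Real.exp_zero]
    exact Real.exp_le_one_iff.mpr (by linarith)
  rcases eq_or_lt_of_le hs with hs0 | hs0
  · rw [← hs0, Real.zero_rpow (ne_of_gt hp0), zero_mul]
    positivity
  have hlog : Real.log (s / p) ≤ s / p - 1 := Real.log_le_sub_one_of_pos (by positivity)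
  rw [Real.log_div (ne_of_gt hs0) (ne_of_gt hp0)] at hlog
  have key : Real.log s * p - s ≤ Real.log p * p - p := by
    have h2 := mul_le_mul_of_nonneg_left hlog hp
    have h3 : p * (s / p - 1) = s - p := by field_simp
    nlinarith
  calc s ^ p * Real.exp (-s) = Real.exp (Real.log s * p - s) := by
        rw [Real.rpow_def_of_pos hs0, Real.exp_sub, Real.exp_neg, div_eq_mul_inv]
    _ ≤ Real.exp (Real.log p * p - p) := Real.exp_le_exp.mpr key
    _ = p ^ p * Real.exp (-p) := by
        rw [Real.rpow_def_of_pos hp0, Real.exp_sub, Real.exp_neg, div_eq_mul_inv]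

lemma pow_mul_exp_sq_le (n : ℕ) (t : ℝ) :
    |t| ^ n * Real.exp (-(t ^ 2) / 4) ≤ (2 * (n : ℝ)) ^ ((n : ℝ) / 2) * Real.exp (-(n : ℝ) / 2) := by
  have habs : ((2:ℕ):ℝ) * ((n:ℝ)/2) = (n:ℝ) := by push_cast; ring
  have h1 : |t| ^ n = (4 : ℝ) ^ ((n : ℝ) / 2) * (t ^ 2 / 4) ^ ((n : ℝ) / 2) := by
    rw [← Real.mul_rpow (by norm_num) (by positivity)]
    have h4 : (4 : ℝ) * (t ^ 2 / 4) = |t| ^ (2 : ℕ) := by rw [sq_abs]; ring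
    rw [h4, ← Real.rpow_natCast |t| 2, ← Real.rpow_mul (abs_nonneg t), habs, Real.rpow_natCast]
  have h2 : (t ^ 2 / 4) ^ ((n : ℝ) / 2) * Real.exp (-(t ^ 2 / 4)) ≤
      ((n : ℝ) / 2) ^ ((n : ℝ) / 2) * Real.exp (-((n : ℝ) / 2)) :=
    rpow_mul_exp_le _ _ (by positivity) (by positivity)
  have h3 : (2 * (n : ℝ)) ^ ((n : ℝ) / 2) =
      (4 : ℝ) ^ ((n : ℝ) / 2) * ((n : ℝ) / 2) ^ ((n : ℝ) / 2) := by
    rw [← Real.mul_rpow (by norm_num) (by positivity)]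
    congr 1; ring
  have h5 : -(t ^ 2) / 4 = -(t ^ 2 / 4) := by ring
  have h6 : -(n : ℝ) / 2 = -((n : ℝ) / 2) := by ring
  rw [h1, h3, h5, h6, mul_assoc, mul_assoc]
  exact mul_le_mul_of_nonneg_left h2 (by positivity)

lemma two_n_rpow_pos (n : ℕ) : 0 < (2 * (n : ℝ)) ^ ((n : ℝ) / 2) := by
  rcases Nat.eq_zero_or_pos n with h | h
  · simp [h]
  · exact Real.rpow_pos_of_pos (by positivity) _

lemma Aα_pos (α : Fin 3 → ℕ) : 0 < Aα α := by
  unfold Aα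
  have h0 := two_n_rpow_pos (α 0); have h1 := two_n_rpow_pos (α 1)
  have h2 := two_n_rpow_pos (α 2)
  positivity

lemma enr_sq (ζ : Fin 3 → ℝ) : (enr ζ) ^ 2 = ζ 0 ^ 2 + ζ 1 ^ 2 + ζ 2 ^ 2 :=
  Real.sq_sqrt (by positivity)

lemma enr_nonneg (ζ : Fin 3 → ℝ) : 0 ≤ enr ζ := Real.sqrt_nonneg _

lemma phi_bound (α : Fin 3 → ℕ) (ζ : Fin 3 → ℝ) :
    |phiα α ζ| ≤ Aα α *
      (Real.exp (-(ζ 0 ^ 2) / 4) * Real.exp (-(ζ 1 ^ 2) / 4) * Real.exp (-(ζ 2 ^ 2) / 4)) := by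
  have hππ : (0:ℝ) < Real.pi ^ (-(3 : ℝ) / 4) := Real.rpow_pos_of_pos Real.pi_pos _
  have hπ : Real.pi ^ (-(3 : ℝ) / 4) ≤ 1 :=
    Real.rpow_le_one_of_one_le_of_nonpos (by linarith [Real.pi_gt_three]) (by norm_num)
  have he : Real.exp (-(enr ζ) ^ 2 / 2) =
      (Real.exp (-(ζ 0 ^ 2) / 4) * Real.exp (-(ζ 1 ^ 2) / 4) * Real.exp (-(ζ 2 ^ 2) / 4)) *
      (Real.exp (-(ζ 0 ^ 2) / 4) * Real.exp (-(ζ 1 ^ 2) / 4) * Real.exp (-(ζ 2 ^ 2) / 4)) := by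
    simp only [← Real.exp_add]
    congr 1
    rw [enr_sq]; ring
  have heq : |phiα α ζ| = Real.pi ^ (-(3 : ℝ) / 4) *
      ((|ζ 0| ^ (α 0) * Real.exp (-(ζ 0 ^ 2) / 4)) *
       (|ζ 1| ^ (α 1) * Real.exp (-(ζ 1 ^ 2) / 4)) *
       (|ζ 2| ^ (α 2) * Real.exp (-(ζ 2 ^ 2) / 4))) *
      (Real.exp (-(ζ 0 ^ 2) / 4) * Real.exp (-(ζ 1 ^ 2) / 4) * Real.exp (-(ζ 2 ^ 2) / 4)) := by
    unfold phiα
    rw [abs_mul, abs_mul, abs_mul, abs_mul, abs_pow, abs_pow, abs_pow, abs_of_pos hππ,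
      Real.abs_exp, he]
    ring
  have hA : Aα α = (2 * (α 0 : ℝ)) ^ ((α 0 : ℝ) / 2) * Real.exp (-(α 0 : ℝ) / 2) *
      ((2 * (α 1 : ℝ)) ^ ((α 1 : ℝ) / 2) * Real.exp (-(α 1 : ℝ) / 2)) *
      ((2 * (α 2 : ℝ)) ^ ((α 2 : ℝ) / 2) * Real.exp (-(α 2 : ℝ) / 2)) := by
    unfold Aα
    rw [show (-(((α 0 : ℝ)) + (α 1 : ℝ) + (α 2 : ℝ)) / 2) =
      (-(α 0 : ℝ) / 2) + (-(α 1 : ℝ) / 2) + (-(α 2 : ℝ) / 2) by ring, Real.exp_add, Real.exp_add]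
    ring
  rw [heq, hA]
  have e0 := pow_mul_exp_sq_le (α 0) (ζ 0)
  have e1 := pow_mul_exp_sq_le (α 1) (ζ 1)
  have e2 := pow_mul_exp_sq_le (α 2) (ζ 2)
  have hexp : (0:ℝ) < Real.exp (-(ζ 0 ^ 2) / 4) * Real.exp (-(ζ 1 ^ 2) / 4) *
      Real.exp (-(ζ 2 ^ 2) / 4) := by positivity
  calc Real.pi ^ (-(3 : ℝ) / 4) *
      ((|ζ 0| ^ (α 0) * Real.exp (-(ζ 0 ^ 2) / 4)) *
       (|ζ 1| ^ (α 1) * Real.exp (-(ζ 1 ^ 2) / 4)) *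
       (|ζ 2| ^ (α 2) * Real.exp (-(ζ 2 ^ 2) / 4))) *
      (Real.exp (-(ζ 0 ^ 2) / 4) * Real.exp (-(ζ 1 ^ 2) / 4) * Real.exp (-(ζ 2 ^ 2) / 4))
      ≤ 1 * (((2 * (α 0 : ℝ)) ^ ((α 0 : ℝ) / 2) * Real.exp (-(α 0 : ℝ) / 2)) *
        ((2 * (α 1 : ℝ)) ^ ((α 1 : ℝ) / 2) * Real.exp (-(α 1 : ℝ) / 2)) *
        ((2 * (α 2 : ℝ)) ^ ((α 2 : ℝ) / 2) * Real.exp (-(α 2 : ℝ) / 2))) *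
      (Real.exp (-(ζ 0 ^ 2) / 4) * Real.exp (-(ζ 1 ^ 2) / 4) * Real.exp (-(ζ 2 ^ 2) / 4)) := by
        gcongr <;> positivity
    _ = _ := by ring

lemma phi_bound' (α : Fin 3 → ℕ) (ζ : Fin 3 → ℝ) :
    |phiα α ζ| ≤ Aα α * Real.exp (-((enr ζ) ^ 2) / 4) := by
  have := phi_bound α ζ
  have he : Real.exp (-(ζ 0 ^ 2) / 4) * Real.exp (-(ζ 1 ^ 2) / 4) * Real.exp (-(ζ 2 ^ 2) / 4)
      = Real.exp (-((enr ζ) ^ 2) / 4) := by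
    rw [← Real.exp_add, ← Real.exp_add]
    congr 1; rw [enr_sq]; ring
  rwa [he] at this

lemma inv_mul_exp_le {c t : ℝ} (hc : 0 < c) (ht : 0 < t) :
    t⁻¹ * Real.exp (-(c / t)) ≤ c⁻¹ := by
  have h1 : c / t ≤ Real.exp (c / t) := by
    have := Real.add_one_le_exp (c / t); linarith
  have h2 : Real.exp (-(c / t)) ≤ t / c := by
    rw [Real.exp_neg, ← inv_div c t]
    exact inv_anti₀ (by positivity) h1
  calc t⁻¹ * Real.exp (-(c / t)) ≤ t⁻¹ * (t / c) := by
        exact mul_le_mul_of_nonneg_left h2 (by positivity)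
    _ = c⁻¹ := by field_simp

lemma sq_le_four_exp {s : ℝ} (hs : 0 ≤ s) : s ^ 2 ≤ 4 * Real.exp s := by
  have h1 := Real.add_one_le_exp (s / 2)
  have h2 : Real.exp s = Real.exp (s / 2) ^ 2 := by
    rw [sq, ← Real.exp_add]
    norm_num
  nlinarith [Real.exp_pos (s/2)]

lemma one_add_rpow_mul_exp_le (a r : ℝ) (ha : 0 ≤ a) (hr : 0 ≤ r) :
    (1 + r) ^ a * Real.exp (-(r ^ 2) / 4) ≤ Real.exp (a ^ 2) := by
  have h1 : (1 + r : ℝ) ≤ Real.exp r := by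
    have := Real.add_one_le_exp r; linarith
  have h2 : (1 + r) ^ a ≤ Real.exp (r * a) := by
    rw [Real.exp_mul]
    exact Real.rpow_le_rpow (by linarith) h1 ha
  calc (1 + r) ^ a * Real.exp (-(r ^ 2) / 4) ≤ Real.exp (r * a) * Real.exp (-(r ^ 2) / 4) :=
        mul_le_mul_of_nonneg_right h2 (Real.exp_pos _).le
    _ = Real.exp (r * a + -(r ^ 2) / 4) := (Real.exp_add _ _).symm
    _ ≤ Real.exp (a ^ 2) := Real.exp_le_exp.mpr (by nlinarith [sq_nonneg (a - r/2)])

lemma oneD (ν₀ x : ℝ) (hν₀ : 0 < ν₀) (hx : 0 < x) (hx1 : x ≤ 1) :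
    IntegrableOn (fun t => t⁻¹ * Real.exp (-(t ^ 2) / 4) * Real.exp (-(ν₀ * x) / t))
      (Ioi (0:ℝ)) ∧
    (∫ t in Ioi (0:ℝ), t⁻¹ * Real.exp (-(t ^ 2) / 4) * Real.exp (-(ν₀ * x) / t)) ≤
      2 / ν₀ ^ 2 + 4 + |Real.log x| := by
  set f : ℝ → ℝ := fun t => t⁻¹ * Real.exp (-(t ^ 2) / 4) * Real.exp (-(ν₀ * x) / t) with hf
  have hνx : 0 < ν₀ * x := by positivity
  have hfnon : ∀ t ∈ Ioi (0:ℝ), 0 ≤ f t := by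
    intro t ht
    have : 0 < t := ht
    positivity
  have hmeas : Measurable f := by fun_prop
  -- global pointwise bound on Ioi 0
  have hbd : ∀ t ∈ Ioi (0:ℝ), f t ≤ (ν₀ * x)⁻¹ * Real.exp (-(1/4) * t ^ 2) := by
    intro t ht
    have ht0 : (0:ℝ) < t := ht
    have h1 : t⁻¹ * Real.exp (-(ν₀ * x) / t) ≤ (ν₀ * x)⁻¹ := by
      have := inv_mul_exp_le hνx ht0
      rwa [← neg_div] at this
    calc f t = (t⁻¹ * Real.exp (-(ν₀ * x) / t)) * Real.exp (-(1/4) * t ^ 2) := by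
          rw [hf]; ring_nf
      _ ≤ (ν₀ * x)⁻¹ * Real.exp (-(1/4) * t ^ 2) :=
          mul_le_mul_of_nonneg_right h1 (Real.exp_pos _).le
  have hgauss : Integrable (fun t : ℝ => Real.exp (-(1/4) * t ^ 2)) :=
    integrable_exp_neg_mul_sq (by norm_num)
  have hint : IntegrableOn f (Ioi (0:ℝ)) := by
    apply Integrable.mono' ((hgauss.const_mul ((ν₀ * x)⁻¹)).integrableOn)
      (hmeas.aestronglyMeasurable.restrict)
    rw [ae_restrict_iff' measurableSet_Ioi]
    filter_upwards with t
    intro ht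
    rw [Real.norm_eq_abs, abs_of_nonneg (hfnon t ht)]
    exact hbd t ht
  refine ⟨hint, ?_⟩
  -- split the integral
  have hsplit1 : Ioc (0:ℝ) x ∪ Ioi x = Ioi (0:ℝ) := Ioc_union_Ioi_eq_Ioi hx.le
  have hsplit2 : Ioc x 1 ∪ Ioi 1 = Ioi x := Ioc_union_Ioi_eq_Ioi hx1
  have hi1 : IntegrableOn f (Ioc (0:ℝ) x) := hint.mono_set (by rw [← hsplit1]; exact subset_union_left)
  have hiIx : IntegrableOn f (Ioi x) := hint.mono_set (by rw [← hsplit1]; exact subset_union_right)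
  have hi2 : IntegrableOn f (Ioc x 1) := hiIx.mono_set (by rw [← hsplit2]; exact subset_union_left)
  have hi3 : IntegrableOn f (Ioi 1) := hiIx.mono_set (by rw [← hsplit2]; exact subset_union_right)
  have heq1 : (∫ t in Ioi (0:ℝ), f t) = (∫ t in Ioc (0:ℝ) x, f t) + (∫ t in Ioi x, f t) := by
    rw [← hsplit1, setIntegral_union (Ioc_disjoint_Ioi le_rfl) measurableSet_Ioi hi1 hiIx]
  have heq2 : (∫ t in Ioi x, f t) = (∫ t in Ioc x 1, f t) + (∫ t in Ioi 1, f t) := by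
    rw [← hsplit2, setIntegral_union (Ioc_disjoint_Ioi le_rfl) measurableSet_Ioi hi2 hi3]
  -- piece 1
  have hIoc1 : (∫ t in Ioc (0:ℝ) x, f t) ≤ 2 / ν₀ ^ 2 := by
    have hb : ∀ t ∈ Ioc (0:ℝ) x, f t ≤ 4 / (ν₀ * x) ^ 2 * t := by
      intro t ht
      obtain ⟨ht0, htx⟩ := ht
      have hs : (0:ℝ) ≤ ν₀ * x / t := by positivity
      have h4 := sq_le_four_exp hs
      have hexp : Real.exp (-(ν₀ * x) / t) ≤ 4 * t ^ 2 / (ν₀ * x) ^ 2 := by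
        rw [neg_div, Real.exp_neg, inv_le_comm₀ (Real.exp_pos _) (by positivity)]
        have heq : (4 * t ^ 2 / (ν₀ * x) ^ 2)⁻¹ = (ν₀ * x / t) ^ 2 / 4 := by
          field_simp
        rw [heq]
        linarith
      have he1 : Real.exp (-(t ^ 2) / 4) ≤ 1 := Real.exp_le_one_iff.mpr (by nlinarith)
      calc f t ≤ (t⁻¹ * 1) * (4 * t ^ 2 / (ν₀ * x) ^ 2) := by
            apply mul_le_mul (mul_le_mul_of_nonneg_left he1 (inv_nonneg.mpr ht0.le)) hexp
              (Real.exp_pos _).le (by positivity)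
        _ = 4 / (ν₀ * x) ^ 2 * t := by field_simp
    calc (∫ t in Ioc (0:ℝ) x, f t) ≤ ∫ t in Ioc (0:ℝ) x, 4 / (ν₀ * x) ^ 2 * t := by
          apply setIntegral_mono_on hi1 ?_ measurableSet_Ioc hb
          exact ((continuous_const.mul continuous_id).integrableOn_Ioc)
      _ = 4 / (ν₀ * x) ^ 2 * ∫ t in Ioc (0:ℝ) x, t := by rw [integral_const_mul]
      _ = 4 / (ν₀ * x) ^ 2 * (x ^ 2 / 2) := by
          rw [← intervalIntegral.integral_of_le hx.le, integral_id]
          norm_num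
      _ = 2 / ν₀ ^ 2 := by field_simp; ring
  -- piece 2
  have hIoc2 : (∫ t in Ioc x 1, f t) ≤ |Real.log x| := by
    have hb : ∀ t ∈ Ioc x 1, f t ≤ t⁻¹ := by
      intro t ht
      obtain ⟨htx, ht1⟩ := ht
      have ht0 : (0:ℝ) < t := lt_trans hx htx
      have he1 : Real.exp (-(t ^ 2) / 4) ≤ 1 := Real.exp_le_one_iff.mpr (by nlinarith)
      have he2 : Real.exp (-(ν₀ * x) / t) ≤ 1 := Real.exp_le_one_iff.mpr
        (by rw [neg_div]; simp; positivity)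
      calc f t ≤ (t⁻¹ * 1) * 1 := by
            apply mul_le_mul (mul_le_mul_of_nonneg_left he1 (inv_nonneg.mpr ht0.le)) he2
              (Real.exp_pos _).le (by positivity)
        _ = t⁻¹ := by ring
    have hiinv : IntegrableOn (fun t : ℝ => t⁻¹) (Ioc x 1) := by
      apply IntegrableOn.mono_set ?_ Ioc_subset_Icc_self
      apply ContinuousOn.integrableOn_Icc
      exact ContinuousOn.inv₀ continuousOn_id
        (fun t ht => ne_of_gt (lt_of_lt_of_le hx ht.1))
    calc (∫ t in Ioc x 1, f t) ≤ ∫ t in Ioc x 1, t⁻¹ :=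
          setIntegral_mono_on hi2 hiinv measurableSet_Ioc hb
      _ = Real.log (1 / x) := by
          rw [← intervalIntegral.integral_of_le hx1, integral_inv]
          intro h0
          rw [uIcc_of_le hx1] at h0
          exact absurd h0.1 (by linarith)
      _ = -Real.log x := by rw [one_div, Real.log_inv]
      _ ≤ |Real.log x| := neg_le_abs _
  -- piece 3
  have hIoc3 : (∫ t in Ioi (1:ℝ), f t) ≤ 4 := by
    have hb : ∀ t ∈ Ioi (1:ℝ), f t ≤ Real.exp (-(1/4) * t ^ 2) := by
      intro t ht
      have ht1 : (1:ℝ) < t := ht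
      have ht0 : (0:ℝ) < t := lt_trans one_pos ht1
      have hti : t⁻¹ ≤ 1 := by rw [inv_le_one₀ ht0]; exact ht1.le
      have he2 : Real.exp (-(ν₀ * x) / t) ≤ 1 := Real.exp_le_one_iff.mpr
        (by rw [neg_div]; simp; positivity)
      calc f t ≤ (1 * Real.exp (-(t ^ 2) / 4)) * 1 := by
            apply mul_le_mul (mul_le_mul_of_nonneg_right hti (Real.exp_pos _).le) he2
              (Real.exp_pos _).le (by positivity)
        _ = Real.exp (-(1/4) * t ^ 2) := by ring_nf
    calc (∫ t in Ioi (1:ℝ), f t) ≤ ∫ t in Ioi (1:ℝ), Real.exp (-(1/4) * t ^ 2) :=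
          setIntegral_mono_on hi3 hgauss.integrableOn measurableSet_Ioi hb
      _ ≤ ∫ t : ℝ, Real.exp (-(1/4) * t ^ 2) :=
          setIntegral_le_integral hgauss (Filter.Eventually.of_forall fun t => (Real.exp_pos _).le)
      _ = Real.sqrt (Real.pi / (1/4)) := integral_gaussian _
      _ ≤ Real.sqrt 16 := Real.sqrt_le_sqrt (by nlinarith [Real.pi_le_four])
      _ = 4 := by
          rw [show (16:ℝ) = 4 ^ 2 by norm_num, Real.sqrt_sq (by norm_num)]
  rw [heq1, heq2]
  linarith

set_option maxHeartbeats 1000000 in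
/-- the L¹, weighted L^∞ and L² bounds for φ_α ζ₁⁻¹ e^{-ν x/ζ₁} on {ζ₁>0}:
(i) L¹ norm ≤ C A_α (1+|ln x|); (ii) ‖·‖_{L^∞_a} ≤ C_a A_α x⁻¹;
(iii) L² norm ≤ C A_α x^{-1/2}(1+|ln x|)^{1/2}. -/
theorem stmt13 (γ ν₀ ν₁ a : ℝ) (hγ0 : 0 < γ) (hγ1 : γ ≤ 1) (hν₀ : 0 < ν₀) (hν₀₁ : ν₀ < ν₁)
    (ha : 0 ≤ a) :
    ∃ C > (0 : ℝ), ∃ Ca > (0 : ℝ), ∀ ν : (Fin 3 → ℝ) → ℝ, Measurable ν →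
      (∀ ζ, ν₀ * (1 + enr ζ) ^ γ ≤ ν ζ ∧ ν ζ ≤ ν₁ * (1 + enr ζ) ^ γ) →
      ∀ (α : Fin 3 → ℕ) (x : ℝ), 0 < x → x ≤ 1 →
        ((∫ ζ in {ζ : Fin 3 → ℝ | 0 < ζ 0},
            |phiα α ζ| * (ζ 0)⁻¹ * Real.exp (-(ν ζ * x) / ζ 0)) ≤ C * Aα α * (1 + |Real.log x|))
        ∧ (∀ ζ : Fin 3 → ℝ, 0 < ζ 0 →
            (1 + enr ζ) ^ a * |phiα α ζ| * (ζ 0)⁻¹ * Real.exp (-(ν ζ * x) / ζ 0) ≤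
              Ca * Aα α * x⁻¹)
        ∧ Real.sqrt (∫ ζ in {ζ : Fin 3 → ℝ | 0 < ζ 0},
            |phiα α ζ| ^ 2 * (ζ 0)⁻¹ ^ 2 * Real.exp (-(2 * ν ζ * x) / ζ 0)) ≤
            C * Aα α * x ^ (-(1 : ℝ) / 2) * (1 + |Real.log x|) ^ ((1 : ℝ) / 2) := by
  have hq : (0:ℝ) < ν₀⁻¹ := inv_pos.mpr hν₀
  set C₁ : ℝ := 2 / ν₀ ^ 2 + 4 with hC₁def
  have hC₁ : (0:ℝ) < C₁ := by rw [hC₁def]; positivity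
  set M : ℝ := 16 * (C₁ + 1) with hMdef
  have hM : 0 < M := by rw [hMdef]; positivity
  set C : ℝ := M * (1 + ν₀⁻¹) + 1 with hCdef
  have hC1 : (1:ℝ) ≤ C := by
    rw [hCdef]; nlinarith
  have hC : (0:ℝ) < C := by linarith
  have hCq : ν₀⁻¹ * M ≤ C := by rw [hCdef]; nlinarith
  refine ⟨C, hC, Real.exp (a ^ 2) * ν₀⁻¹, by positivity, ?_⟩
  intro ν hνmeas hνbd α x hx hx1
  have hA := Aα_pos α
  set L := |Real.log x| with hLdef
  have hL0 : 0 ≤ L := abs_nonneg _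
  have hνx : 0 < ν₀ * x := by positivity
  have hS : MeasurableSet {ζ : Fin 3 → ℝ | 0 < ζ 0} :=
    measurableSet_lt measurable_const (measurable_pi_apply 0)
  -- ν is bounded below by ν₀
  have hνlow : ∀ ζ : Fin 3 → ℝ, ν₀ ≤ ν ζ := by
    intro ζ
    have h1 : (1:ℝ) ≤ (1 + enr ζ) ^ γ := by
      calc (1:ℝ) = 1 ^ γ := (Real.one_rpow γ).symm
        _ ≤ (1 + enr ζ) ^ γ :=
            Real.rpow_le_rpow zero_le_one (by linarith [enr_nonneg ζ]) hγ0.le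
    calc ν₀ = ν₀ * 1 := (mul_one ν₀).symm
      _ ≤ ν₀ * (1 + enr ζ) ^ γ := by nlinarith
      _ ≤ ν ζ := (hνbd ζ).1
  have hexple : ∀ ζ : Fin 3 → ℝ, 0 < ζ 0 →
      Real.exp (-(ν ζ * x) / ζ 0) ≤ Real.exp (-(ν₀ * x) / ζ 0) := by
    intro ζ hζ
    apply Real.exp_le_exp.mpr
    apply (div_le_div_iff_of_pos_right hζ).mpr
    have : ν₀ * x ≤ ν ζ * x := mul_le_mul_of_nonneg_right (hνlow ζ) hx.le
    linarith
  have hbound3 : ∀ ζ : Fin 3 → ℝ, 0 < ζ 0 →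
      (ζ 0)⁻¹ * Real.exp (-(ν ζ * x) / ζ 0) ≤ (ν₀ * x)⁻¹ := by
    intro ζ hζ
    calc (ζ 0)⁻¹ * Real.exp (-(ν ζ * x) / ζ 0)
        ≤ (ζ 0)⁻¹ * Real.exp (-(ν₀ * x) / ζ 0) :=
          mul_le_mul_of_nonneg_left (hexple ζ hζ) (inv_nonneg.mpr hζ.le)
      _ ≤ (ν₀ * x)⁻¹ := by rw [neg_div]; exact inv_mul_exp_le hνx hζ
  -- comparison product function
  set g₀ : ℝ → ℝ := (Ioi (0:ℝ)).indicator
    (fun t => t⁻¹ * Real.exp (-(t ^ 2) / 4) * Real.exp (-(ν₀ * x) / t)) with hg₀def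
  set g₁ : ℝ → ℝ := fun t => Real.exp (-(t ^ 2) / 4) with hg₁def
  have hg₁eq : g₁ = fun t => Real.exp (-(1/4:ℝ) * t ^ 2) := by
    funext t; rw [hg₁def]; ring_nf
  obtain ⟨hJint, hJbd⟩ := oneD ν₀ x hν₀ hx hx1
  have hg₀int : Integrable g₀ := hJint.integrable_indicator measurableSet_Ioi
  have hg₁int : Integrable g₁ := by
    rw [hg₁eq]; exact integrable_exp_neg_mul_sq (by norm_num)
  have hg₀nonneg : ∀ t, 0 ≤ g₀ t := by
    intro t
    apply Set.indicator_nonneg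
    intro s hs
    have : (0:ℝ) < s := hs
    positivity
  set F : (Fin 3 → ℝ) → ℝ := fun ζ => g₀ (ζ 0) * g₁ (ζ 1) * g₁ (ζ 2) with hFdef
  have hFnonneg : ∀ ζ, 0 ≤ F ζ := by
    intro ζ
    rw [hFdef]
    have := hg₀nonneg (ζ 0)
    have h1 : (0:ℝ) < g₁ (ζ 1) := Real.exp_pos _
    have h2 : (0:ℝ) < g₁ (ζ 2) := Real.exp_pos _
    positivity
  have hFint : Integrable F := by
    have h := Integrable.fintype_prod (𝕜 := ℝ) (f := ![g₀, g₁, g₁]) (μ := fun _ => volume)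
      (fun i => by fin_cases i <;> simpa)
    have heq : (fun ζ : Fin 3 → ℝ => ∏ i, ![g₀, g₁, g₁] i (ζ i)) = F := by
      funext ζ
      rw [Fin.prod_univ_three, hFdef]
      rfl
    rwa [heq] at h
  have hg₁nn : 0 ≤ ∫ t, g₁ t := integral_nonneg fun t => (Real.exp_pos _).le
  have hg₁val : ∫ t, g₁ t ≤ 4 := by
    rw [hg₁eq]
    rw [integral_gaussian]
    calc Real.sqrt (Real.pi / (1/4)) ≤ Real.sqrt 16 :=
          Real.sqrt_le_sqrt (by nlinarith [Real.pi_le_four])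
      _ = 4 := by rw [show (16:ℝ) = 4 ^ 2 by norm_num, Real.sqrt_sq (by norm_num)]
  have hJnn : 0 ≤ ∫ t, g₀ t := integral_nonneg hg₀nonneg
  have hJval : ∫ t, g₀ t ≤ C₁ + L := by
    rw [hg₀def, integral_indicator measurableSet_Ioi]
    rw [hC₁def, hLdef]
    linarith [hJbd]
  have hFval : ∫ ζ, F ζ ≤ 16 * (C₁ + L) := by
    have h := integral_fintype_prod_volume_eq_prod (𝕜 := ℝ) (ι := Fin 3) ![g₀, g₁, g₁]
    have heq : (fun ζ : Fin 3 → ℝ => ∏ i, ![g₀, g₁, g₁] i (ζ i)) = F := by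
      funext ζ
      rw [Fin.prod_univ_three, hFdef]
      rfl
    rw [heq, Fin.prod_univ_three] at h
    simp only [Matrix.cons_val_zero, Matrix.cons_val_one, Matrix.head_cons,
      Matrix.cons_val_two, Matrix.tail_cons] at h
    rw [h]
    have hCL : (0:ℝ) ≤ C₁ + L := by linarith
    calc (∫ t, g₀ t) * (∫ t, g₁ t) * (∫ t, g₁ t)
        ≤ (C₁ + L) * 4 * 4 := by
          apply mul_le_mul (mul_le_mul hJval hg₁val hg₁nn hCL) hg₁val hg₁nn (by positivity)
      _ = 16 * (C₁ + L) := by ring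
  -- key pointwise bound
  have hkey : ∀ ζ : Fin 3 → ℝ, 0 < ζ 0 →
      |phiα α ζ| * (ζ 0)⁻¹ * Real.exp (-(ν ζ * x) / ζ 0) ≤ Aα α * F ζ := by
    intro ζ hζ
    have hg₀val : g₀ (ζ 0) =
        (ζ 0)⁻¹ * Real.exp (-(ζ 0 ^ 2) / 4) * Real.exp (-(ν₀ * x) / ζ 0) :=
      Set.indicator_of_mem hζ _
    calc |phiα α ζ| * (ζ 0)⁻¹ * Real.exp (-(ν ζ * x) / ζ 0)
        ≤ (Aα α * (Real.exp (-(ζ 0 ^ 2) / 4) * Real.exp (-(ζ 1 ^ 2) / 4) *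
            Real.exp (-(ζ 2 ^ 2) / 4))) * (ζ 0)⁻¹ * Real.exp (-(ν₀ * x) / ζ 0) := by
          apply mul_le_mul
            (mul_le_mul_of_nonneg_right (phi_bound α ζ) (inv_nonneg.mpr hζ.le))
            (hexple ζ hζ) (Real.exp_pos _).le
          have h1 : (0:ℝ) ≤ Aα α := hA.le
          positivity
      _ = Aα α * F ζ := by
          rw [hFdef]
          simp only [hg₀val, hg₁def]
          ring
  have hnum1 : 16 * (C₁ + L) ≤ M * (1 + L) := by
    rw [hMdef]; nlinarith
  -- part (i)
  have hpart1 : (∫ ζ in {ζ : Fin 3 → ℝ | 0 < ζ 0},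
      |phiα α ζ| * (ζ 0)⁻¹ * Real.exp (-(ν ζ * x) / ζ 0)) ≤ C * Aα α * (1 + L) := by
    rw [← integral_indicator hS]
    calc (∫ ζ, ({ζ : Fin 3 → ℝ | 0 < ζ 0}).indicator
          (fun ζ => |phiα α ζ| * (ζ 0)⁻¹ * Real.exp (-(ν ζ * x) / ζ 0)) ζ)
        ≤ ∫ ζ, Aα α * F ζ := by
          apply integral_mono_of_nonneg
          · filter_upwards with ζ
            apply Set.indicator_nonneg
            intro ζ' hζ'
            have hζ'0 : (0:ℝ) < ζ' 0 := hζ'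
            positivity
          · exact hFint.const_mul _
          · filter_upwards with ζ
            by_cases hζ : ζ ∈ {ζ : Fin 3 → ℝ | 0 < ζ 0}
            · rw [Set.indicator_of_mem hζ]
              exact hkey ζ hζ
            · rw [Set.indicator_of_notMem hζ]
              exact mul_nonneg hA.le (hFnonneg ζ)
      _ = Aα α * ∫ ζ, F ζ := integral_const_mul _ _
      _ ≤ Aα α * (16 * (C₁ + L)) := mul_le_mul_of_nonneg_left hFval hA.le
      _ ≤ Aα α * (M * (1 + L)) := mul_le_mul_of_nonneg_left hnum1 hA.le
      _ ≤ C * Aα α * (1 + L) := by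
          have hMC : M ≤ C := by rw [hCdef]; nlinarith
          have h1L : (0:ℝ) ≤ 1 + L := by linarith
          calc Aα α * (M * (1 + L)) = M * Aα α * (1 + L) := by ring
            _ ≤ C * Aα α * (1 + L) := by
                apply mul_le_mul_of_nonneg_right (mul_le_mul_of_nonneg_right hMC hA.le) h1L
  refine ⟨hpart1, ?_, ?_⟩
  -- part (ii)
  · intro ζ hζ
    have hbound2 : (1 + enr ζ) ^ a * |phiα α ζ| ≤ Real.exp (a ^ 2) * Aα α := by
      calc (1 + enr ζ) ^ a * |phiα α ζ|
          ≤ (1 + enr ζ) ^ a * (Aα α * Real.exp (-((enr ζ) ^ 2) / 4)) :=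
            mul_le_mul_of_nonneg_left (phi_bound' α ζ)
              (Real.rpow_nonneg (by linarith [enr_nonneg ζ]) a)
        _ = ((1 + enr ζ) ^ a * Real.exp (-((enr ζ) ^ 2) / 4)) * Aα α := by ring
        _ ≤ Real.exp (a ^ 2) * Aα α :=
            mul_le_mul_of_nonneg_right
              (one_add_rpow_mul_exp_le a (enr ζ) ha (enr_nonneg ζ)) hA.le
    have hrw : (1 + enr ζ) ^ a * |phiα α ζ| * (ζ 0)⁻¹ * Real.exp (-(ν ζ * x) / ζ 0)
        = ((1 + enr ζ) ^ a * |phiα α ζ|) * ((ζ 0)⁻¹ * Real.exp (-(ν ζ * x) / ζ 0)) := by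
      ring
    rw [hrw]
    have hnn1 : (0:ℝ) ≤ (ζ 0)⁻¹ * Real.exp (-(ν ζ * x) / ζ 0) :=
      mul_nonneg (inv_nonneg.mpr hζ.le) (Real.exp_pos _).le
    calc ((1 + enr ζ) ^ a * |phiα α ζ|) * ((ζ 0)⁻¹ * Real.exp (-(ν ζ * x) / ζ 0))
        ≤ (Real.exp (a ^ 2) * Aα α) * (ν₀ * x)⁻¹ :=
          mul_le_mul hbound2 (hbound3 ζ hζ) hnn1 (mul_nonneg (Real.exp_pos _).le hA.le)
      _ = Real.exp (a ^ 2) * ν₀⁻¹ * Aα α * x⁻¹ := by rw [mul_inv]; ring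
  -- part (iii)
  · have hφ1 : ∀ ζ : Fin 3 → ℝ, |phiα α ζ| ≤ Aα α := by
      intro ζ
      calc |phiα α ζ| ≤ Aα α * Real.exp (-((enr ζ) ^ 2) / 4) := phi_bound' α ζ
        _ ≤ Aα α * 1 := by
            apply mul_le_mul_of_nonneg_left ?_ hA.le
            apply Real.exp_le_one_iff.mpr
            nlinarith [enr_nonneg ζ, sq_nonneg (enr ζ)]
        _ = Aα α := mul_one _
    have hkey2 : ∀ ζ : Fin 3 → ℝ, 0 < ζ 0 →
        |phiα α ζ| ^ 2 * (ζ 0)⁻¹ ^ 2 * Real.exp (-(2 * ν ζ * x) / ζ 0) ≤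
          ((ν₀ * x)⁻¹ * Aα α) * (Aα α * F ζ) := by
      intro ζ hζ
      have hsq : Real.exp (-(ν ζ * x) / ζ 0) ^ 2 = Real.exp (-(2 * ν ζ * x) / ζ 0) := by
        rw [sq, ← Real.exp_add]
        congr 1
        ring
      have hr : |phiα α ζ| ^ 2 * (ζ 0)⁻¹ ^ 2 * Real.exp (-(2 * ν ζ * x) / ζ 0)
          = (|phiα α ζ| * (ζ 0)⁻¹ * Real.exp (-(ν ζ * x) / ζ 0)) *
            (|phiα α ζ| * (ζ 0)⁻¹ * Real.exp (-(ν ζ * x) / ζ 0)) := by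
        rw [← hsq]; ring
      rw [hr]
      have h2 : |phiα α ζ| * (ζ 0)⁻¹ * Real.exp (-(ν ζ * x) / ζ 0) ≤ (ν₀ * x)⁻¹ * Aα α := by
        calc |phiα α ζ| * (ζ 0)⁻¹ * Real.exp (-(ν ζ * x) / ζ 0)
            = |phiα α ζ| * ((ζ 0)⁻¹ * Real.exp (-(ν ζ * x) / ζ 0)) := by ring
          _ ≤ Aα α * (ν₀ * x)⁻¹ :=
              mul_le_mul (hφ1 ζ) (hbound3 ζ hζ)
                (mul_nonneg (inv_nonneg.mpr hζ.le) (Real.exp_pos _).le) hA.le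
          _ = (ν₀ * x)⁻¹ * Aα α := by ring
      have hnn : 0 ≤ |phiα α ζ| * (ζ 0)⁻¹ * Real.exp (-(ν ζ * x) / ζ 0) :=
        mul_nonneg (mul_nonneg (abs_nonneg _) (inv_nonneg.mpr hζ.le)) (Real.exp_pos _).le
      exact mul_le_mul h2 (hkey ζ hζ) hnn
        (mul_nonneg (inv_nonneg.mpr hνx.le) hA.le)
    have hI2 : (∫ ζ in {ζ : Fin 3 → ℝ | 0 < ζ 0},
        |phiα α ζ| ^ 2 * (ζ 0)⁻¹ ^ 2 * Real.exp (-(2 * ν ζ * x) / ζ 0)) ≤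
        ((ν₀ * x)⁻¹ * Aα α * Aα α) * (16 * (C₁ + L)) := by
      rw [← integral_indicator hS]
      calc (∫ ζ, ({ζ : Fin 3 → ℝ | 0 < ζ 0}).indicator
            (fun ζ => |phiα α ζ| ^ 2 * (ζ 0)⁻¹ ^ 2 * Real.exp (-(2 * ν ζ * x) / ζ 0)) ζ)
          ≤ ∫ ζ, ((ν₀ * x)⁻¹ * Aα α * Aα α) * F ζ := by
            apply integral_mono_of_nonneg
            · filter_upwards with ζ
              apply Set.indicator_nonneg
              intro ζ' hζ'
              positivity
            · exact hFint.const_mul _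
            · filter_upwards with ζ
              by_cases hζ : ζ ∈ {ζ : Fin 3 → ℝ | 0 < ζ 0}
              · rw [Set.indicator_of_mem hζ]
                calc |phiα α ζ| ^ 2 * (ζ 0)⁻¹ ^ 2 * Real.exp (-(2 * ν ζ * x) / ζ 0)
                    ≤ ((ν₀ * x)⁻¹ * Aα α) * (Aα α * F ζ) := hkey2 ζ hζ
                  _ = ((ν₀ * x)⁻¹ * Aα α * Aα α) * F ζ := by ring
              · rw [Set.indicator_of_notMem hζ]
                exact mul_nonneg (mul_nonneg (mul_nonneg (inv_nonneg.mpr hνx.le) hA.le) hA.le)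
                  (hFnonneg ζ)
        _ = ((ν₀ * x)⁻¹ * Aα α * Aα α) * ∫ ζ, F ζ := integral_const_mul _ _
        _ ≤ ((ν₀ * x)⁻¹ * Aα α * Aα α) * (16 * (C₁ + L)) :=
            mul_le_mul_of_nonneg_left hFval
              (mul_nonneg (mul_nonneg (inv_nonneg.mpr hνx.le) hA.le) hA.le)
    -- convert to the sqrt bound
    have hx2 : (x ^ (-(1:ℝ) / 2)) ^ 2 = x⁻¹ := by
      rw [← Real.rpow_natCast (x ^ (-(1:ℝ) / 2)) 2, ← Real.rpow_mul hx.le]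
      norm_num [Real.rpow_neg_one]
    have hL2 : ((1 + L) ^ ((1:ℝ) / 2)) ^ 2 = 1 + L := by
      rw [← Real.rpow_natCast ((1 + L) ^ ((1:ℝ) / 2)) 2, ← Real.rpow_mul (by linarith)]
      norm_num
    have hRHS0 : 0 ≤ C * Aα α * x ^ (-(1:ℝ) / 2) * (1 + L) ^ ((1:ℝ) / 2) := by
      apply mul_nonneg (mul_nonneg (mul_nonneg hC.le hA.le) (Real.rpow_nonneg hx.le _))
        (Real.rpow_nonneg (by linarith) _)
    have hRHSsq : (C * Aα α * x ^ (-(1:ℝ) / 2) * (1 + L) ^ ((1:ℝ) / 2)) ^ 2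
        = C ^ 2 * Aα α ^ 2 * x⁻¹ * (1 + L) := by
      rw [mul_pow, mul_pow, mul_pow, hx2, hL2]
    have hnum2 : ν₀⁻¹ * (16 * (C₁ + L)) ≤ C ^ 2 * (1 + L) := by
      calc ν₀⁻¹ * (16 * (C₁ + L)) ≤ ν₀⁻¹ * (M * (1 + L)) :=
            mul_le_mul_of_nonneg_left hnum1 hq.le
        _ = (ν₀⁻¹ * M) * (1 + L) := by ring
        _ ≤ C * (1 + L) := mul_le_mul_of_nonneg_right hCq (by linarith)
        _ ≤ C ^ 2 * (1 + L) := mul_le_mul_of_nonneg_right (by nlinarith) (by linarith)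
    have hfinal : ((ν₀ * x)⁻¹ * Aα α * Aα α) * (16 * (C₁ + L)) ≤
        (C * Aα α * x ^ (-(1:ℝ) / 2) * (1 + L) ^ ((1:ℝ) / 2)) ^ 2 := by
      rw [hRHSsq]
      calc ((ν₀ * x)⁻¹ * Aα α * Aα α) * (16 * (C₁ + L))
          = (Aα α * Aα α * x⁻¹) * (ν₀⁻¹ * (16 * (C₁ + L))) := by rw [mul_inv]; ring
        _ ≤ (Aα α * Aα α * x⁻¹) * (C ^ 2 * (1 + L)) := by
            apply mul_le_mul_of_nonneg_left hnum2
            have := inv_nonneg.mpr hx.le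
            positivity
        _ = C ^ 2 * Aα α ^ 2 * x⁻¹ * (1 + L) := by ring
    calc Real.sqrt (∫ ζ in {ζ : Fin 3 → ℝ | 0 < ζ 0},
          |phiα α ζ| ^ 2 * (ζ 0)⁻¹ ^ 2 * Real.exp (-(2 * ν ζ * x) / ζ 0))
        ≤ Real.sqrt ((C * Aα α * x ^ (-(1:ℝ) / 2) * (1 + L) ^ ((1:ℝ) / 2)) ^ 2) :=
          Real.sqrt_le_sqrt (le_trans hI2 hfinal)
      _ = C * Aα α * x ^ (-(1:ℝ) / 2) * (1 + L) ^ ((1:ℝ) / 2) := Real.sqrt_sq hRHS0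
end
end
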